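/- arXiv:0709.4678 — 4 statements merged into one kernel-verified Lean document; each statement's English description precedes it below -/
import Mathlib

section
/- Let n ≥ 2, let T be an n×n Markov matrix, and let M be a random n×n matrix distributed as U(M_n) (rows i.i.d. uniform on the simplex Λ_n). Then the matrix product T·M has the same law as M if and only if T is a permutation matrix. -/
open MeasureTheory ProbabilityTheory

noncomputable section

/-- The standard simplex `Λ_n ⊆ ℝ^n` (Euclidean space). -/
def simplexSet (n : ℕ) : Set (EuclideanSpace ℝ (Fin n)) :=
  {x | (∀ i, 0 ≤ x i) ∧ ∑ i, x i = 1}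

/-- The uniform distribution on `Λ_n`: normalized `(n-1)`-dimensional Hausdorff measure. -/
def simplexUniformE (n : ℕ) : Measure (EuclideanSpace ℝ (Fin n)) :=
  (μH[(n : ℝ) - 1] (simplexSet n))⁻¹ • (μH[(n : ℝ) - 1]).restrict (simplexSet n)

/-- The uniform distribution on `Λ_n`, transported to the plain function space `Fin n → ℝ`. -/
def simplexUniform (n : ℕ) : Measure (Fin n → ℝ) :=
  (simplexUniformE n).map (MeasurableEquiv.toLp 2 (Fin n → ℝ)).symm

/-- `U(M_n)`: the law of a random `n × n` matrix (rows first) with i.i.d. rows uniform on `Λ_n`. -/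
def markovUniform (n : ℕ) : Measure (Fin n → Fin n → ℝ) :=
  Measure.pi fun _ : Fin n => simplexUniform n

/-- A matrix (rows first) is Markov: non-negative entries and each row sums to `1`. -/
def IsMarkovMatrix {n : ℕ} (T : Fin n → Fin n → ℝ) : Prop :=
  (∀ i j, 0 ≤ T i j) ∧ ∀ i, ∑ j, T i j = 1

/-- A permutation matrix: a 0–1 matrix with exactly one `1` in each row and each column. -/
def IsPermutationMatrix {n : ℕ} (T : Fin n → Fin n → ℝ) : Prop :=
  ∃ σ : Equiv.Perm (Fin n), ∀ i j, T i j = if σ i = j then 1 else 0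

lemma aux_variance_map {α Ω : Type*} [MeasurableSpace α] [MeasurableSpace Ω]
    (μ : Measure Ω) {Y : Ω → α} {f : α → ℝ} (hY : Measurable Y) (hf : Measurable f) :
    variance f (μ.map Y) = variance (f ∘ Y) μ := by
  have hmean : (μ.map Y)[f] = μ[f ∘ Y] := integral_map hY.aemeasurable hf.aestronglyMeasurable
  have : evariance f (μ.map Y) = evariance (f ∘ Y) μ := by
    rw [evariance, evariance,
      lintegral_map (f := fun ω => ‖f ω - (μ.map Y)[f]‖ₑ ^ 2) (((hf.sub_const _).enorm).pow_const 2) hY, hmean]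
    rfl
  rw [variance, variance, this]

lemma aux_map_eval_pi {ι : Type*} [Fintype ι] {α : ι → Type*} [∀ i, MeasurableSpace (α i)]
    (ν : ∀ i, Measure (α i)) [∀ i, IsProbabilityMeasure (ν i)] (k : ι) :
    (Measure.pi ν).map (fun m => m k) = ν k := by
  classical
  ext s hs
  rw [Measure.map_apply (measurable_pi_apply k) hs]
  have h1 : (fun m : ∀ i, α i => m k) ⁻¹' s
      = Set.pi Set.univ (Function.update (fun i => (Set.univ : Set (α i))) k s) :=
    Set.eval_preimage
  rw [h1, Measure.pi_pi]
  rw [Finset.prod_eq_single k]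
  · rw [Function.update_self]
  · intro j _ hj
    rw [Function.update_of_ne hj]
    exact measure_univ
  · intro h; exact absurd (Finset.mem_univ k) h

lemma aux_iIndepFun_pi {ι : Type*} [Fintype ι] {α : ι → Type*} [∀ i, MeasurableSpace (α i)]
    (ν : ∀ i, Measure (α i)) [∀ i, IsProbabilityMeasure (ν i)] :
    iIndepFun (fun i (m : ∀ j, α j) => m i) (Measure.pi ν) := by
  classical
  rw [iIndepFun_iff_measure_inter_preimage_eq_mul]
  intro S sets hsets
  have h1 : (⋂ i ∈ S, (fun m : ∀ j, α j => m i) ⁻¹' sets i)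
      = Set.pi Set.univ (fun j => if j ∈ S then sets j else Set.univ) := by
    ext m
    simp only [Set.mem_iInter, Set.mem_preimage, Set.mem_pi, Set.mem_univ, true_implies]
    constructor
    · intro h j
      by_cases hj : j ∈ S
      · simpa [hj] using h j hj
      · simp [hj]
    · intro h i hi
      have := h i
      simpa [hi] using this
  rw [h1, Measure.pi_pi]
  have h2 : ∀ j, ν j (if j ∈ S then sets j else Set.univ)
      = if j ∈ S then ν j (sets j) else 1 := by
    intro j; split_ifs <;> simp
  simp_rw [h2]
  rw [Finset.prod_ite_mem Finset.univ S, Finset.univ_inter]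
  refine Finset.prod_congr rfl fun i hi => ?_
  rw [← aux_map_eval_pi ν i, Measure.map_apply (measurable_pi_apply i) (hsets i hi)]

lemma aux_meas_simplexSet (n : ℕ) : MeasurableSet (simplexSet n) := by
  have h1 : ∀ i : Fin n, Measurable (fun x : EuclideanSpace ℝ (Fin n) => x i) := fun i =>
    (measurable_pi_apply i).comp (MeasurableEquiv.toLp 2 (Fin n → ℝ)).symm.measurable
  have h2 : simplexSet n =
      (⋂ i, {x : EuclideanSpace ℝ (Fin n) | 0 ≤ x i}) ∩
        {x : EuclideanSpace ℝ (Fin n) | ∑ i, x i = 1} := by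
    ext x; simp [simplexSet]
  rw [h2]
  refine MeasurableSet.inter (MeasurableSet.iInter fun i => ?_) ?_
  · exact measurableSet_le measurable_const (h1 i)
  · exact (Finset.measurable_sum Finset.univ fun i _ => h1 i) (measurableSet_singleton 1)


set_option maxHeartbeats 1600000 in
/-- if `n ≥ 2`, `T` is an `n × n` Markov matrix and `M ~ U(M_n)`, then the
product `T·M` has the same law as `M` if and only if `T` is a permutation matrix. -/
theorem markovUniform_left_translation_invariant_iff (n : ℕ) (hn : 2 ≤ n)
    (T : Fin n → Fin n → ℝ) (hT : IsMarkovMatrix T)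
    {Ω : Type*} [MeasurableSpace Ω] (P : Measure Ω) [IsProbabilityMeasure P]
    (M : Ω → Fin n → Fin n → ℝ) (hM : Measurable M)
    (hlaw : P.map M = markovUniform n) :
    P.map (fun ω => fun i j => ∑ k, T i k * M ω k j) = P.map M ↔
      IsPermutationMatrix T := by
  classical
  set e := (MeasurableEquiv.toLp 2 (Fin n → ℝ)).symm with he
  set ν := simplexUniform n with hν
  set μ := markovUniform n with hμdef
  have hd_pos : (0:ℝ) < (n:ℝ) - 1 := by
    have : (2:ℝ) ≤ (n:ℝ) := by exact_mod_cast hn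
    linarith
  haveI hH_noatoms : NoAtoms (μH[(n:ℝ)-1] : Measure (EuclideanSpace ℝ (Fin n))) :=
    Measure.noAtoms_hausdorff _ hd_pos
  set cS := μH[(n:ℝ)-1] (simplexSet n) with hcS
  have hμprob : IsProbabilityMeasure μ := by
    rw [← hlaw]; exact Measure.isProbabilityMeasure_map hM.aemeasurable
  have hν_eq : ∀ A : Set (Fin n → ℝ), MeasurableSet A →
      ν A = cS⁻¹ * μH[(n:ℝ)-1] (⇑e ⁻¹' A ∩ simplexSet n) := by
    intro A hA
    rw [hν, simplexUniform, Measure.map_apply e.measurable hA, simplexUniformE,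
      Measure.smul_apply, Measure.restrict_apply' (aux_meas_simplexSet n), smul_eq_mul, ← hcS, he]
  have hνuniv : ν Set.univ = cS⁻¹ * cS := by
    rw [hν_eq _ MeasurableSet.univ, Set.preimage_univ, Set.univ_inter]
  have hcS_cases : ¬(cS = 0 ∨ cS = ⊤) := by
    intro hc
    have hν0 : ν = 0 := by
      ext A hA
      rw [hν_eq A hA]
      rcases hc with h | h
      · have h0 : μH[(n:ℝ)-1] (⇑e ⁻¹' A ∩ simplexSet n) = 0 :=
          measure_mono_null Set.inter_subset_right h
        simp [h0]
      · simp [h]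
    have h1 : μ Set.univ = 1 := measure_univ
    rw [hμdef, markovUniform, ← hν, hν0, Measure.pi_univ] at h1
    simp only [Measure.coe_zero, Pi.zero_apply, Finset.prod_const] at h1
    rw [zero_pow (by simp only [Finset.card_univ, Fintype.card_fin]; omega)] at h1
    exact zero_ne_one h1
  push_neg at hcS_cases
  obtain ⟨hcS0, hcStop⟩ := hcS_cases
  haveI hνprob : IsProbabilityMeasure ν :=
    ⟨by rw [hνuniv]; exact ENNReal.inv_mul_cancel hcS0 hcStop⟩
  have hν_atom : ∀ x : Fin n → ℝ, ν {x} = 0 := by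
    intro x
    rw [hν_eq _ (measurableSet_singleton x)]
    have h0 : μH[(n:ℝ)-1] (⇑e ⁻¹' {x} ∩ simplexSet n) = 0 := by
      apply measure_mono_null Set.inter_subset_left
      have h1 : ⇑e ⁻¹' {x} = {e.symm x} := by
        ext y
        simp only [Set.mem_preimage, Set.mem_singleton_iff]
        constructor
        · intro h; simpa using congrArg e.symm h
        · intro h; simp [h]
      rw [h1]
      exact hH_noatoms.measure_singleton _
    simp [h0]
  set S' : Set (Fin n → ℝ) := {x | (∀ i, 0 ≤ x i) ∧ ∑ i, x i = 1} with hS'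
  have hS'meas : MeasurableSet S' := by
    have h2 : S' = (⋂ i, {x : Fin n → ℝ | 0 ≤ x i}) ∩ {x : Fin n → ℝ | ∑ i, x i = 1} := by
      ext x; simp [hS']
    rw [h2]
    refine MeasurableSet.inter (MeasurableSet.iInter fun i => ?_) ?_
    · exact measurableSet_le measurable_const (measurable_pi_apply i)
    · exact (Finset.measurable_sum Finset.univ fun i _ => measurable_pi_apply i)
        (measurableSet_singleton 1)
  have hν_S' : ν S'ᶜ = 0 := by
    rw [hν_eq _ hS'meas.compl]
    have h0 : ⇑e ⁻¹' S'ᶜ ∩ simplexSet n = ∅ := by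
      apply Set.eq_empty_iff_forall_notMem.mpr
      rintro y ⟨hy1, hy2⟩
      exact hy1 ⟨hy2.1, hy2.2⟩
    rw [h0]
    simp
  have hmap_eval : ∀ k : Fin n, μ.map (fun m => m k) = ν := by
    intro k
    rw [hμdef, markovUniform, ← hν]
    exact aux_map_eval_pi _ k
  have hind : iIndepFun (fun k (m : Fin n → Fin n → ℝ) => m k) μ := by
    rw [hμdef, markovUniform, ← hν]
    exact aux_iIndepFun_pi _
  constructor
  · intro h
    set F : (Fin n → Fin n → ℝ) → (Fin n → Fin n → ℝ) := fun m i j => ∑ k, T i k * m k j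
      with hF
    have hFmeas : Measurable F := by
      refine measurable_pi_lambda _ fun i => measurable_pi_lambda _ fun j => ?_
      exact Finset.measurable_sum _ fun k _ =>
        measurable_const.mul ((measurable_pi_apply j).comp (measurable_pi_apply k))
    have hμF : μ.map F = μ := by
      have h1 : P.map (F ∘ M) = μ.map F := by rw [← Measure.map_map hFmeas hM, hlaw]
      rw [← h1]
      exact h.trans hlaw
    have j0lt : 0 < n := by omega
    set j₀ : Fin n := ⟨0, j0lt⟩ with hj₀
    have hXmeas : ∀ k : Fin n, Measurable (fun m : Fin n → Fin n → ℝ => m k j₀) :=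
      fun k => (measurable_pi_apply j₀).comp (measurable_pi_apply k)
    set v := variance (fun x : Fin n → ℝ => x j₀) ν with hv
    have hvar_k : ∀ k : Fin n, variance (fun m : Fin n → Fin n → ℝ => m k j₀) μ = v := by
      intro k
      have h1 : (fun m : Fin n → Fin n → ℝ => m k j₀)
          = (fun x : Fin n → ℝ => x j₀) ∘ (fun m : Fin n → Fin n → ℝ => m k) := rfl
      rw [h1, ← aux_variance_map μ (measurable_pi_apply k) (measurable_pi_apply j₀),
        hmap_eval k, hv]
    have hboundS' : ∀ x : Fin n → ℝ, x ∈ S' → ‖x j₀‖ ≤ 1 := by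
      intro x hx
      have h1 : 0 ≤ x j₀ := hx.1 j₀
      have h2 : x j₀ ≤ 1 := by
        rw [← hx.2]
        exact Finset.single_le_sum (fun i _ => hx.1 i) (Finset.mem_univ j₀)
      rw [Real.norm_eq_abs, abs_le]
      constructor <;> linarith
    have hmemX : ∀ k : Fin n, MemLp (fun m : Fin n → Fin n → ℝ => m k j₀) 2 μ := by
      intro k
      refine MemLp.of_bound (hXmeas k).aestronglyMeasurable 1 ?_
      have h0 : μ ((fun m : Fin n → Fin n → ℝ => m k) ⁻¹' S'ᶜ) = 0 := by
        rw [← Measure.map_apply (measurable_pi_apply k) hS'meas.compl, hmap_eval k]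
        exact hν_S'
      have hae : ∀ᵐ m ∂μ, m k ∈ S' := by
        rw [ae_iff]
        exact h0
      filter_upwards [hae] with m hm
      exact hboundS' _ hm
    have hv_pos : 0 < v := by
      rcases (variance_nonneg (fun x : Fin n → ℝ => x j₀) ν).lt_or_eq with h' | h'
      · exact h'
      exfalso
      have hmemE : MemLp (fun x : Fin n → ℝ => x j₀) 2 ν := by
        refine MemLp.of_bound (measurable_pi_apply j₀).aestronglyMeasurable 1 ?_
        have hae : ∀ᵐ x ∂ν, x ∈ S' := by
          rw [ae_iff]
          exact hν_S'
        filter_upwards [hae] with x hx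
        exact hboundS' _ hx
      have hvar0 : variance (fun x : Fin n → ℝ => x j₀) ν = 0 := h'.symm
      have hev : evariance (fun x : Fin n → ℝ => x j₀) ν = 0 := by
        have hlt := hmemE.evariance_lt_top
        rw [variance] at hvar0
        rcases (ENNReal.toReal_eq_zero_iff _).mp hvar0 with h0 | h0
        · exact h0
        · exact absurd h0 hlt.ne
      set c : ℝ := ∫ x, x j₀ ∂ν with hc
      have haec : ∀ᵐ x ∂ν, x j₀ = c := by
        have h2 := (evariance_eq_zero_iff (measurable_pi_apply j₀).aemeasurable).mp hev
        filter_upwards [h2] with x hx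
        exact hx
      have hbase : μH[(n:ℝ)-1]
          (simplexSet n ∩ {y : EuclideanSpace ℝ (Fin n) | y j₀ ≠ c}) = 0 := by
        have hmeasA : MeasurableSet {x : Fin n → ℝ | x j₀ ≠ c} := by
          have h23 : {x : Fin n → ℝ | x j₀ ≠ c} = (fun x : Fin n → ℝ => x j₀) ⁻¹' ({c}ᶜ) := rfl
          rw [h23]
          exact (measurable_pi_apply j₀) (measurableSet_singleton c).compl
        have h0 : ν {x : Fin n → ℝ | x j₀ ≠ c} = 0 := by
          rw [ae_iff] at haec
          exact haec
        rw [hν_eq _ hmeasA] at h0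
        rcases mul_eq_zero.mp h0 with h2 | h2
        · exact absurd h2 (ENNReal.inv_ne_zero.mpr hcStop)
        · rw [← h2]
          rw [Set.inter_comm]
          rfl
      have hslice : ∀ j : Fin n,
          μH[(n:ℝ)-1] (simplexSet n ∩ {y : EuclideanSpace ℝ (Fin n) | y j ≠ c}) = 0 := by
        intro j
        set σ := Equiv.swap j₀ j with hσswap
        set φ := LinearIsometryEquiv.piLpCongrLeft 2 ℝ ℝ σ with hφdef
        have happ : ∀ (x : EuclideanSpace ℝ (Fin n)) (i : Fin n), φ x i = x (σ i) := by
          intro x i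
          rw [hφdef, LinearIsometryEquiv.piLpCongrLeft_apply]
          show x (σ.symm i) = x (σ i)
          rw [Equiv.symm_swap]
        have hpre : ⇑φ ⁻¹' (simplexSet n ∩ {y : EuclideanSpace ℝ (Fin n) | y j₀ ≠ c})
            = simplexSet n ∩ {y : EuclideanSpace ℝ (Fin n) | y j ≠ c} := by
          ext x
          simp only [Set.mem_preimage, Set.mem_inter_iff, Set.mem_setOf_eq, simplexSet]
          have hsum : ∑ i, φ x i = ∑ i, x i := by
            rw [Finset.sum_congr rfl fun i _ => happ x i]
            exact Equiv.sum_comp σ x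
          have hj0 : φ x j₀ = x j := by
            rw [happ, hσswap, Equiv.swap_apply_left]
          constructor
          · rintro ⟨⟨hpos, hs1⟩, hne⟩
            refine ⟨⟨fun i => ?_, ?_⟩, ?_⟩
            · have h3 := hpos (σ i)
              rwa [happ, hσswap, Equiv.swap_apply_self] at h3
            · rw [← hsum]
              exact hs1
            · rwa [hj0] at hne
          · rintro ⟨⟨hpos, hs1⟩, hne⟩
            refine ⟨⟨fun i => ?_, ?_⟩, ?_⟩
            · rw [happ]
              exact hpos (σ i)
            · rw [hsum]
              exact hs1
            · rwa [hj0]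
        have hiso := Isometry.hausdorffMeasure_preimage (d := (n:ℝ)-1) φ.isometry
          (Or.inl (le_of_lt hd_pos)) (simplexSet n ∩ {y : EuclideanSpace ℝ (Fin n) | y j₀ ≠ c})
        rw [hpre] at hiso
        rw [hiso]
        exact measure_mono_null Set.inter_subset_left hbase
      have hsub : simplexSet n ⊆
          {(WithLp.toLp 2 (fun _ => c) : EuclideanSpace ℝ (Fin n))} ∪
            ⋃ j, (simplexSet n ∩ {y : EuclideanSpace ℝ (Fin n) | y j ≠ c}) := by
        intro x hx
        by_cases hxp : ∀ j, x j = c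
        · left
          have hxeq : x = (WithLp.toLp 2 (fun _ => c) : EuclideanSpace ℝ (Fin n)) := PiLp.ext hxp
          simp [hxeq]
        · right
          push_neg at hxp
          obtain ⟨j, hj⟩ := hxp
          exact Set.mem_iUnion.mpr ⟨j, hx, hj⟩
      have hps : μH[(n:ℝ)-1]
          ({(WithLp.toLp 2 (fun _ => c) : EuclideanSpace ℝ (Fin n))} : Set (EuclideanSpace ℝ (Fin n))) = 0 :=
        hH_noatoms.measure_singleton _
      have hUn : μH[(n:ℝ)-1]
          (⋃ j, (simplexSet n ∩ {y : EuclideanSpace ℝ (Fin n) | y j ≠ c})) = 0 :=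
        measure_iUnion_null hslice
      have h00 := measure_union_null hps hUn
      exact hcS0 (by rw [hcS]; exact measure_mono_null hsub h00)
    have hrow : ∀ i, ∃ k, ∀ l, T i l = if k = l then 1 else 0 := by
      intro i
      have hWmeas : Measurable (fun m : Fin n → Fin n → ℝ => ∑ k, T i k * m k j₀) :=
        Finset.measurable_sum _ fun k _ => measurable_const.mul (hXmeas k)
      have hμW : μ.map (fun m : Fin n → Fin n → ℝ => ∑ k, T i k * m k j₀)
          = μ.map (fun m : Fin n → Fin n → ℝ => m i j₀) := by
        have h1 : (fun m : Fin n → Fin n → ℝ => ∑ k, T i k * m k j₀)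
            = (fun m : Fin n → Fin n → ℝ => m i j₀) ∘ F := rfl
        rw [h1, ← Measure.map_map (hXmeas i) hFmeas, hμF]
      have hvW : variance (fun m : Fin n → Fin n → ℝ => ∑ k, T i k * m k j₀) μ = v := by
        have h2 := (aux_variance_map μ hWmeas (measurable_id : Measurable (id : ℝ → ℝ))).symm
        have h3 : (id : ℝ → ℝ) ∘ (fun m : Fin n → Fin n → ℝ => ∑ k, T i k * m k j₀)
            = (fun m : Fin n → Fin n → ℝ => ∑ k, T i k * m k j₀) := rfl
        rw [h3] at h2
        rw [h2, hμW, aux_variance_map μ (hXmeas i) (measurable_id : Measurable (id : ℝ → ℝ))]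
        have h4 : (id : ℝ → ℝ) ∘ (fun m : Fin n → Fin n → ℝ => m i j₀)
            = (fun m : Fin n → Fin n → ℝ => m i j₀) := rfl
        rw [h4]
        exact hvar_k i
      have hsum : variance (fun m : Fin n → Fin n → ℝ => ∑ k, T i k * m k j₀) μ
          = ∑ k, (T i k)^2 * v := by
        have h3 : (fun m : Fin n → Fin n → ℝ => ∑ k, T i k * m k j₀)
            = ∑ k : Fin n, (fun m : Fin n → Fin n → ℝ => T i k * m k j₀) := by
          funext m
          simp [Finset.sum_apply]
        rw [h3, IndepFun.variance_sum]
        · refine Finset.sum_congr rfl fun k _ => ?_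
          have h5 : (fun m : Fin n → Fin n → ℝ => T i k * m k j₀)
              = (T i k) • (fun m : Fin n → Fin n → ℝ => m k j₀) := rfl
          rw [h5, variance_smul, hvar_k k]
        · exact fun k _ => (hmemX k).const_mul (T i k)
        · intro a _ b _ hab
          have h6 := (hind.indepFun hab).comp
            (φ := fun r : Fin n → ℝ => T i a * r j₀) (ψ := fun r : Fin n → ℝ => T i b * r j₀)
            (by fun_prop) (by fun_prop)
          exact h6
      have hkey : (∑ k, (T i k)^2) = 1 := by
        have h7 : v = (∑ k, (T i k)^2) * v := by
          rw [Finset.sum_mul, ← hsum, hvW]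
        have h8 : (∑ k, (T i k)^2) * v = 1 * v := by
          rw [← h7, one_mul]
        exact mul_right_cancel₀ (ne_of_gt hv_pos) h8
      have hle1 : ∀ k, T i k ≤ 1 := fun k => by
        rw [← hT.2 i]
        exact Finset.single_le_sum (fun l _ => hT.1 i l) (Finset.mem_univ k)
      have h01 : ∀ k, T i k = 0 ∨ T i k = 1 := by
        have hz : ∑ k, T i k * (1 - T i k) = 0 := by
          have h9 : ∀ k : Fin n, T i k * (1 - T i k) = T i k - (T i k)^2 := fun k => by ring
          rw [Finset.sum_congr rfl fun k _ => h9 k, Finset.sum_sub_distrib, hT.2 i, hkey,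
            sub_self]
        intro k
        have hnn : ∀ l ∈ Finset.univ, (0:ℝ) ≤ T i l * (1 - T i l) := fun l _ =>
          mul_nonneg (hT.1 i l) (by linarith [hle1 l])
        have h10 := (Finset.sum_eq_zero_iff_of_nonneg hnn).mp hz k (Finset.mem_univ k)
        rcases mul_eq_zero.mp h10 with h11 | h11
        · exact Or.inl h11
        · right
          linarith
      have hex : ∃ k, T i k = 1 := by
        by_contra hcon
        push_neg at hcon
        have h12 : ∀ k ∈ Finset.univ, T i k = 0 := fun k _ => (h01 k).resolve_right (hcon k)
        have h13 := hT.2 i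
        rw [Finset.sum_eq_zero h12] at h13
        exact one_ne_zero h13.symm
      obtain ⟨k, hk⟩ := hex
      refine ⟨k, fun l => ?_⟩
      by_cases hkl : k = l
      · subst hkl
        simp [hk]
      · simp only [hkl, if_false]
        rcases h01 l with h14 | h14
        · exact h14
        exfalso
        have h15 : ∑ j, T i j = T i k + ∑ j ∈ Finset.univ.erase k, T i j :=
          (Finset.add_sum_erase Finset.univ (T i) (Finset.mem_univ k)).symm
        have h16 : T i l ≤ ∑ j ∈ Finset.univ.erase k, T i j :=
          Finset.single_le_sum (fun x _ => hT.1 i x)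
            (Finset.mem_erase.mpr ⟨fun hc => hkl hc.symm, Finset.mem_univ l⟩)
        have h17 := hT.2 i
        rw [h15] at h17
        rw [hk, h14] at *
        linarith
    choose f hf using hrow
    have hFrow : ∀ (m : Fin n → Fin n → ℝ) (x : Fin n) (j : Fin n), F m x j = m (f x) j := by
      intro m x j
      show (∑ k, T x k * m k j) = m (f x) j
      rw [Finset.sum_congr rfl fun k _ => by rw [hf x k]]
      simp [ite_mul]
    have hinj : Function.Injective f := by
      intro a b hab
      by_contra hne
      have hFab : ∀ m : Fin n → Fin n → ℝ, F m a = F m b := by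
        intro m
        funext j
        rw [hFrow m a j, hFrow m b j, hab]
      have hpair_meas : Measurable (fun m : Fin n → Fin n → ℝ => (m a, m b)) :=
        (measurable_pi_apply a).prodMk (measurable_pi_apply b)
      have hdiag : MeasurableSet {q : (Fin n → ℝ) × (Fin n → ℝ) | q.1 = q.2} :=
        (isClosed_eq continuous_fst continuous_snd).measurableSet
      set D : Set (Fin n → Fin n → ℝ) :=
        (fun m : Fin n → Fin n → ℝ => (m a, m b)) ⁻¹' {q : (Fin n → ℝ) × (Fin n → ℝ) | q.1 = q.2}
        with hD
      have hDmeas : MeasurableSet D := hpair_meas hdiag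
      have hD1 : μ D = 1 := by
        have h18 : μ D = (μ.map F) D := by rw [hμF]
        rw [h18, Measure.map_apply hFmeas hDmeas]
        have h19 : F ⁻¹' D = Set.univ := Set.eq_univ_of_forall fun m => by
          show F m a = F m b
          exact hFab m
        rw [h19]
        exact measure_univ
      have hD0 : μ D = 0 := by
        have hindab : IndepFun (fun m : Fin n → Fin n → ℝ => m a)
            (fun m : Fin n → Fin n → ℝ => m b) μ := hind.indepFun hne
        have hmapp : μ.map (fun m : Fin n → Fin n → ℝ => (m a, m b)) = ν.prod ν := by
          rw [(indepFun_iff_map_prod_eq_prod_map_map (measurable_pi_apply a).aemeasurable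
            (measurable_pi_apply b).aemeasurable).mp hindab, hmap_eval a, hmap_eval b]
        have h20 : μ D = (ν.prod ν) {q : (Fin n → ℝ) × (Fin n → ℝ) | q.1 = q.2} := by
          rw [← hmapp, Measure.map_apply hpair_meas hdiag]
        rw [h20, Measure.prod_apply hdiag]
        have h21 : ∀ x : Fin n → ℝ,
            ν (Prod.mk x ⁻¹' {q : (Fin n → ℝ) × (Fin n → ℝ) | q.1 = q.2}) = 0 := by
          intro x
          have h22 : (Prod.mk x ⁻¹' {q : (Fin n → ℝ) × (Fin n → ℝ) | q.1 = q.2}) = {x} := by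
            ext y
            simp [eq_comm]
          rw [h22]
          exact hν_atom x
        exact (lintegral_congr h21).trans lintegral_zero
      rw [hD1] at hD0
      exact one_ne_zero hD0
    have hbij : Function.Bijective f := Finite.injective_iff_bijective.mp hinj
    refine ⟨Equiv.ofBijective f hbij, fun i j => ?_⟩
    simp only [Equiv.ofBijective_apply]
    exact hf i j

  · rintro ⟨σ, hσ⟩
    have hR : Measurable (fun (m : Fin n → Fin n → ℝ) (i : Fin n) => m (σ i)) :=
      measurable_pi_lambda _ fun i => measurable_pi_apply (σ i)
    have h1 : (fun ω => fun i j => ∑ k, T i k * M ω k j)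
        = (fun (m : Fin n → Fin n → ℝ) (i : Fin n) => m (σ i)) ∘ M := by
      funext ω i j
      simp only [Function.comp_apply]
      rw [Finset.sum_congr rfl fun k _ => by rw [hσ i k]]
      simp [ite_mul]
    rw [h1, ← Measure.map_map hR hM, hlaw]
    have : μ.map (fun (m : Fin n → Fin n → ℝ) (i : Fin n) => m (σ i)) = μ := by
      rw [hμdef, markovUniform, ← hν]
      refine (Measure.pi_eq fun s hs => ?_).symm
      rw [Measure.map_apply hR (MeasurableSet.univ_pi hs)]
      have h2 : (fun (m : Fin n → Fin n → ℝ) (i : Fin n) => m (σ i)) ⁻¹' Set.pi Set.univ s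
          = Set.pi Set.univ (fun k => s (σ.symm k)) := by
        ext m
        simp only [Set.mem_preimage, Set.mem_pi, Set.mem_univ, true_implies]
        constructor
        · intro hm k
          have := hm (σ.symm k)
          rwa [Equiv.apply_symm_apply] at this
        · intro hm i
          have := hm (σ i)
          rwa [Equiv.symm_apply_apply] at this
      rw [h2, Measure.pi_pi]
      exact Equiv.prod_comp σ.symm fun i => ν (s i)
    exact this
end
end

section
/- Let n ≥ 2. There is no probability measure μ on the set M_n of n×n Markov matrices which is absolutely continuous with respect to U(M_n), has full support (its topological support equals all of M_n), and is invariant under every left translation M ↦ T·M with T running over all n×n Markov matrices. The same holds with right translations M ↦ M·T in place of left translations. -/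
open MeasureTheory ProbabilityTheory

noncomputable section

/-- for `n ≥ 2` there is no probability measure on `M_n`, absolutely continuous
with respect to `U(M_n)`, with full topological support (every open set meeting `M_n` has
positive measure), and invariant under every left translation `M ↦ T·M`, `T ∈ M_n`;
and the same holds for right translations `M ↦ M·T`. -/
theorem no_idempotent_full_support_measure_on_markov (n : ℕ) (hn : 2 ≤ n) :
    (¬ ∃ μ : Measure (Fin n → Fin n → ℝ), IsProbabilityMeasure μ ∧
        μ ≪ markovUniform n ∧
        (∀ U : Set (Fin n → Fin n → ℝ), IsOpen U →
          (U ∩ {A | IsMarkovMatrix A}).Nonempty → 0 < μ U) ∧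
        (∀ T : Fin n → Fin n → ℝ, IsMarkovMatrix T →
          μ.map (fun M => fun i j => ∑ k, T i k * M k j) = μ)) ∧
    (¬ ∃ μ : Measure (Fin n → Fin n → ℝ), IsProbabilityMeasure μ ∧
        μ ≪ markovUniform n ∧
        (∀ U : Set (Fin n → Fin n → ℝ), IsOpen U →
          (U ∩ {A | IsMarkovMatrix A}).Nonempty → 0 < μ U) ∧
        (∀ T : Fin n → Fin n → ℝ, IsMarkovMatrix T →
          μ.map (fun M => fun i j => ∑ k, M i k * T k j) = μ)) := by
  have hn0 : 0 < n := by omega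
  have hn1 : 1 < n := by omega
  set i0 : Fin n := ⟨0, hn0⟩
  set i1 : Fin n := ⟨1, hn1⟩
  have hne : i1 ≠ i0 := by simp [i0, i1, Fin.ext_iff]
  -- the Markov matrix all of whose rows are e_{i0}
  set T : Fin n → Fin n → ℝ := fun _ j => if j = i0 then 1 else 0 with hTdef
  have hT : IsMarkovMatrix T := by
    constructor
    · intro i j; dsimp [T]; split <;> norm_num
    · intro i; simp [T]
  constructor
  · rintro ⟨μ, hprob, -, hsupp, hinv⟩
    -- pushforward by left multiplication with T maps into matrices with all rows equal
    set f : (Fin n → Fin n → ℝ) → (Fin n → Fin n → ℝ) :=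
      fun M => fun i j => ∑ k, T i k * M k j with hfdef
    have hfM : ∀ M i j, f M i j = M i0 j := by
      intro M i j
      simp [f, T, ite_mul, Finset.sum_ite_eq']
    have hfmeas : Measurable f := by
      apply measurable_pi_lambda; intro i
      apply measurable_pi_lambda; intro j
      exact Finset.measurable_sum _ fun k _ =>
        (measurable_const.mul ((measurable_pi_apply k).comp measurable_id |>.eval))
    set U : Set (Fin n → Fin n → ℝ) := {A | A i0 i1 ≠ A i1 i1} with hU
    have hUopen : IsOpen U := by
      have h1 : Continuous fun A : Fin n → Fin n → ℝ => A i0 i1 :=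
        (continuous_apply i1).comp (continuous_apply i0)
      have h2 : Continuous fun A : Fin n → Fin n → ℝ => A i1 i1 :=
        (continuous_apply i1).comp (continuous_apply i1)
      exact isOpen_ne_fun h1 h2
    have hUne : (U ∩ {A | IsMarkovMatrix A}).Nonempty := by
      refine ⟨fun i j => if i = j then 1 else 0, ?_, ?_, ?_⟩
      · simp [U, hne, hne.symm]
      · intro i j; dsimp; split <;> norm_num
      · intro i; simp
    have hpre : f ⁻¹' U = ∅ := by
      ext M; simp [U, hfM]
    have : μ U = 0 := by
      rw [← hinv T hT, Measure.map_apply hfmeas hUopen.measurableSet, hpre,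
        measure_empty]
    exact absurd (hsupp U hUopen hUne) (by simp [this])
  · rintro ⟨μ, hprob, -, hsupp, hinv⟩
    set g : (Fin n → Fin n → ℝ) → (Fin n → Fin n → ℝ) :=
      fun M => fun i j => ∑ k, M i k * T k j with hgdef
    have hgM : ∀ M i, g M i i1 = 0 := by
      intro M i
      simp [g, T, hne]
    have hgmeas : Measurable g := by
      apply measurable_pi_lambda; intro i
      apply measurable_pi_lambda; intro j
      exact Finset.measurable_sum _ fun k _ =>
        (((measurable_pi_apply i).eval).mul_const _)
    set U : Set (Fin n → Fin n → ℝ) := {A | A i0 i1 ≠ 0} with hU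
    have hUopen : IsOpen U := by
      have h1 : Continuous fun A : Fin n → Fin n → ℝ => A i0 i1 :=
        (continuous_apply i1).comp (continuous_apply i0)
      exact isOpen_ne_fun h1 continuous_const
    have hUne : (U ∩ {A | IsMarkovMatrix A}).Nonempty := by
      refine ⟨fun _ _ => (n : ℝ)⁻¹, ?_, ?_, ?_⟩
      · simp [U]
        positivity
      · intro i j; positivity
      · intro i
        rw [Finset.sum_const, Finset.card_univ, Fintype.card_fin, nsmul_eq_mul,
          mul_inv_cancel₀ (by positivity : (n : ℝ) ≠ 0)]
    have hpre : g ⁻¹' U = ∅ := by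
      ext M; simp [U, hgM]
    have : μ U = 0 := by
      rw [← hinv T hT, Measure.map_apply hgmeas hUopen.measurableSet, hpre,
        measure_empty]
    exact absurd (hsupp U hUopen hUne) (by simp [this])
end
end

section
/- Let (X_{i,j})_{i,j≥1} be an infinite array of i.i.d. real random variables with mean m ≠ 0 and finite variance, and set S_{i,n} = X_{i,1}+⋯+X_{i,n}. Then almost surely, max_{1≤i≤n} |n/S_{i,n} − 1/m| → 0 as n → ∞ (in particular, almost surely, for all large n all the sums S_{1,n},…,S_{n,n} are nonzero). -/
open MeasureTheory ProbabilityTheory Filter Topology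

noncomputable section

section AuxiliaryLemmas

open scoped ENNReal

variable {Ω : Type*} [MeasurableSpace Ω] {P : Measure Ω}

lemma iIndepFun_comp_injective {ι κ : Type*} {Y : ι → Ω → ℝ}
    (h : iIndepFun Y P) (g : κ → ι)
    (hg : Function.Injective g) :
    iIndepFun (fun k => Y (g k)) P := by
  classical
  rw [iIndepFun_iff_measure_inter_preimage_eq_mul] at h ⊢
  intro S sets hsets
  set sets' : ι → Set ℝ := fun i => ⋂ k ∈ S.filter (fun k => g k = i), sets k with hsets'
  have hmeas' : ∀ i, i ∈ S.image g → MeasurableSet (sets' i) := by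
    intro i _
    exact Finset.measurableSet_biInter _ (fun k hk => hsets k (Finset.mem_filter.1 hk).1)
  have hval : ∀ k ∈ S, sets' (g k) = sets k := by
    intro k hk
    have : S.filter (fun k' => g k' = g k) = {k} := by
      ext k'
      simp only [Finset.mem_filter, Finset.mem_singleton]
      constructor
      · rintro ⟨_, h2⟩; exact hg h2
      · rintro rfl; exact ⟨hk, rfl⟩
    rw [hsets']
    simp only [this, Finset.mem_singleton, Set.iInter_iInter_eq_left]
  have hset_eq : (⋂ k ∈ S, (fun ω => Y (g k) ω) ⁻¹' sets k) = ⋂ i ∈ S.image g, Y i ⁻¹' sets' i := by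
    ext x
    simp only [Set.mem_iInter, Set.mem_preimage, Finset.mem_image, hsets']
    constructor
    · rintro hx i ⟨k, hk, rfl⟩
      simp only [Set.mem_iInter, Set.mem_preimage, Finset.mem_filter]
      rintro k' ⟨hk', hgk'⟩
      have := hx k' hk'
      rwa [hgk'] at this
    · intro hx k hk
      exact hx (g k) ⟨k, hk, rfl⟩ k (Finset.mem_filter.2 ⟨hk, rfl⟩)
  have hprod : ∏ i ∈ S.image g, P (Y i ⁻¹' sets' i) = ∏ k ∈ S, P ((fun ω => Y (g k) ω) ⁻¹' sets k) := by
    rw [Finset.prod_image (fun a ha b hb hab => hg hab)]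
    exact Finset.prod_congr rfl fun k hk => by rw [hval k hk]
  rw [hset_eq, h (S.image g) hmeas', hprod]

variable [IsProbabilityMeasure P]

lemma cheb_sum {Y : ℕ → Ω → ℝ}
    (hindep : iIndepFun Y P)
    (hL2 : ∀ j, MemLp (Y j) 2 P) (hmean : ∀ j, ∫ ω, Y j ω ∂P = 0)
    {v : ℝ} (hv : ∀ j, variance (Y j) P ≤ v)
    (s : Finset ℕ) {a : ℝ} (ha : 0 < a) :
    P {ω | a ≤ |∑ j ∈ s, Y j ω|} ≤ ENNReal.ofReal (s.card * v / a ^ 2) := by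
  have hZ : MemLp (∑ j ∈ s, Y j) 2 P := memLp_finset_sum' s (fun j _ => hL2 j)
  have hmeanZ : P[∑ j ∈ s, Y j] = 0 := by
    have : ∫ ω, ∑ j ∈ s, Y j ω ∂P = 0 := by
      rw [integral_finset_sum s (fun j _ => (hL2 j).integrable one_le_two)]
      simp [hmean]
    simpa [Finset.sum_apply] using this
  have hvar : variance (∑ j ∈ s, Y j) P ≤ s.card * v := by
    rw [IndepFun.variance_sum (fun j _ => hL2 j)
      (fun j hj j' hj' hne => hindep.indepFun hne)]
    calc ∑ j ∈ s, variance (Y j) P ≤ ∑ j ∈ s, v := Finset.sum_le_sum (fun j _ => hv j)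
      _ = s.card * v := by rw [Finset.sum_const, nsmul_eq_mul]
  calc P {ω | a ≤ |∑ j ∈ s, Y j ω|}
      = P {ω | a ≤ |(∑ j ∈ s, Y j) ω - P[∑ j ∈ s, Y j]|} := by
        rw [hmeanZ]
        simp only [Finset.sum_apply, sub_zero]
    _ ≤ ENNReal.ofReal (variance (∑ j ∈ s, Y j) P / a ^ 2) :=
        meas_ge_le_variance_div_sq hZ ha
    _ ≤ ENNReal.ofReal (s.card * v / a ^ 2) := by
        apply ENNReal.ofReal_le_ofReal
        exact div_le_div_of_nonneg_right hvar (by positivity) |>.trans_eq rfl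

namespace UniformLLN

def restr (Y : ℕ → Ω → ℝ) (s : Finset ℕ) : Ω → (↥s → ℝ) := fun ω j => Y (↑j) ω

def psum (s u : Finset ℕ) : (↥s → ℝ) → ℝ :=
  fun v => ∑ j ∈ u, if h : j ∈ s then v ⟨j, h⟩ else 0

lemma measurable_restr {Y : ℕ → Ω → ℝ} (hY : ∀ j, Measurable (Y j)) (s : Finset ℕ) :
    Measurable (restr Y s) := measurable_pi_lambda _ (fun j => hY ↑j)

lemma measurable_psum (s u : Finset ℕ) : Measurable (psum s u) := by
  apply Finset.measurable_sum
  intro j _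
  by_cases h : j ∈ s
  · simpa [h] using measurable_pi_apply (⟨j, h⟩ : ↥s)
  · simp [h]

lemma psum_restr {Y : ℕ → Ω → ℝ} {s u : Finset ℕ} (h : u ⊆ s) (ω : Ω) :
    psum s u (restr Y s ω) = ∑ j ∈ u, Y j ω := by
  apply Finset.sum_congr rfl
  intro j hj
  rw [dif_pos (h hj)]
  rfl

/-- Etemadi-type maximal inequality. -/
lemma etemadi {Y : ℕ → Ω → ℝ} (hY : ∀ j, Measurable (Y j))
    (hindep : iIndepFun Y P)
    (hL2 : ∀ j, MemLp (Y j) 2 P) (hmean : ∀ j, ∫ ω, Y j ω ∂P = 0)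
    {v : ℝ} (hv : ∀ j, variance (Y j) P ≤ v)
    (N : ℕ) {α : ℝ} (hα : 0 < α) :
    P {ω | ∃ k ≤ N, 3 * α ≤ |∑ j ∈ Finset.range k, Y j ω|} ≤
      ENNReal.ofReal (2 * N * v / α ^ 2) := by
  classical
  have hv0 : 0 ≤ v := le_trans (variance_nonneg _ _) (hv 0)
  set Sp : ℕ → Ω → ℝ := fun k ω => ∑ j ∈ Finset.range k, Y j ω with hSp
  -- first-passage events
  set A : ℕ → Set Ω := fun k =>
    restr Y (Finset.range k) ⁻¹'
      {w | 3 * α ≤ |psum (Finset.range k) (Finset.range k) w| ∧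
        ∀ l < k, |psum (Finset.range k) (Finset.range l) w| < 3 * α} with hA
  have mem_A : ∀ k ω, ω ∈ A k ↔
      (3 * α ≤ |Sp k ω| ∧ ∀ l < k, |Sp l ω| < 3 * α) := by
    intro k ω
    simp only [hA, Set.mem_preimage, Set.mem_setOf_eq]
    rw [psum_restr le_rfl]
    constructor
    · rintro ⟨h1, h2⟩
      refine ⟨h1, fun l hl => ?_⟩
      have := h2 l hl
      rwa [psum_restr (Finset.range_subset_range.2 hl.le)] at this
    · rintro ⟨h1, h2⟩
      refine ⟨h1, fun l hl => ?_⟩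
      rw [psum_restr (Finset.range_subset_range.2 hl.le)]
      exact h2 l hl
  have measA : ∀ k, MeasurableSet
      {w : ↥(Finset.range k) → ℝ | 3 * α ≤ |psum (Finset.range k) (Finset.range k) w| ∧
        ∀ l < k, |psum (Finset.range k) (Finset.range l) w| < 3 * α} := by
    intro k
    have heq : {w : ↥(Finset.range k) → ℝ |
        3 * α ≤ |psum (Finset.range k) (Finset.range k) w| ∧
          ∀ l < k, |psum (Finset.range k) (Finset.range l) w| < 3 * α} =
        {w | 3 * α ≤ |psum (Finset.range k) (Finset.range k) w|} ∩
          ⋂ (l : ℕ) (_ : l < k),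
            {w | |psum (Finset.range k) (Finset.range l) w| < 3 * α} := by
      ext w; simp [Set.mem_iInter]
    rw [heq]
    exact (measurableSet_le measurable_const (measurable_psum _ _).abs).inter
      (MeasurableSet.iInter fun l => MeasurableSet.iInter fun _ =>
        measurableSet_lt (measurable_psum _ _).abs measurable_const)
  -- tail events
  set C : ℕ → Set Ω := fun k =>
    restr Y (Finset.Ico k N) ⁻¹'
      {w | 2 * α ≤ |psum (Finset.Ico k N) (Finset.Ico k N) w|} with hC
  have mem_C : ∀ k ω, ω ∈ C k ↔ 2 * α ≤ |∑ j ∈ Finset.Ico k N, Y j ω| := by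
    intro k ω
    simp only [hC, Set.mem_preimage, Set.mem_setOf_eq]
    rw [psum_restr le_rfl]
  have measC : ∀ k, MeasurableSet
      {w : ↥(Finset.Ico k N) → ℝ | 2 * α ≤ |psum (Finset.Ico k N) (Finset.Ico k N) w|} :=
    fun k => measurableSet_le measurable_const (measurable_psum _ _).abs
  -- independence of A k and C k
  have hfact : ∀ k, P (A k ∩ C k) = P (A k) * P (C k) := by
    intro k
    have hdisj : Disjoint (Finset.range k) (Finset.Ico k N) := by
      simp only [Finset.disjoint_left, Finset.mem_range, Finset.mem_Ico]
      omega
    exact (hindep.indepFun_finset _ _ hdisj hY).measure_inter_preimage_eq_mul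
      _ _ (measA k) (measC k)
  -- the decomposition
  have hsub : {ω | ∃ k ≤ N, 3 * α ≤ |Sp k ω|} ⊆
      {ω | α ≤ |Sp N ω|} ∪ ⋃ k ∈ Finset.range (N + 1), A k ∩ C k := by
    intro ω hω
    obtain ⟨n, hnN, hn⟩ := hω
    have hex : ∃ k, 3 * α ≤ |Sp k ω| := ⟨n, hn⟩
    set k := Nat.find hex with hk
    have hkspec : 3 * α ≤ |Sp k ω| := Nat.find_spec hex
    have hkmin : ∀ l < k, |Sp l ω| < 3 * α := fun l hl =>
      lt_of_not_ge (Nat.find_min hex hl)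
    have hkN : k ≤ N := le_trans (Nat.find_min' hex hn) hnN
    have hωA : ω ∈ A k := (mem_A k ω).2 ⟨hkspec, hkmin⟩
    by_cases hSN : α ≤ |Sp N ω|
    · exact Or.inl hSN
    · right
      push_neg at hSN
      refine Set.mem_biUnion (Finset.mem_range.2 (Nat.lt_succ_of_le hkN)) ⟨hωA, ?_⟩
      rw [mem_C]
      have hsum : ∑ j ∈ Finset.Ico k N, Y j ω = Sp N ω - Sp k ω := by
        rw [hSp]
        rw [Finset.sum_Ico_eq_sub _ hkN]
      rw [hsum]
      have h1 := abs_sub_abs_le_abs_sub (Sp k ω) (Sp N ω)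
      rw [abs_sub_comm] at h1
      linarith
  -- disjointness of the A k
  have hdisjA : Set.Pairwise ↑(Finset.range (N + 1)) (Function.onFun Disjoint A) := by
    intro k _ k' _ hne
    rcases hne.lt_or_gt with hlt | hlt
    · rw [Function.onFun, Set.disjoint_left]
      intro ω h1 h2
      exact absurd ((mem_A k ω).1 h1).1 (not_le.2 (((mem_A k' ω).1 h2).2 k hlt))
    · rw [Function.onFun, Set.disjoint_right]
      intro ω h1 h2
      exact absurd ((mem_A k' ω).1 h1).1 (not_le.2 (((mem_A k ω).1 h2).2 k' hlt))
  have hsumA : ∑ k ∈ Finset.range (N + 1), P (A k) ≤ 1 := by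
    have measAk : ∀ k, MeasurableSet (A k) :=
      fun k => (measurable_restr hY _) (measA k)
    rw [← measure_biUnion_finset hdisjA (fun k _ => measAk k)]
    exact prob_le_one
  -- probability bounds
  have hC_bound : ∀ k, P (C k) ≤ ENNReal.ofReal (N * v / (4 * α ^ 2)) := by
    intro k
    have hCk : C k = {ω | 2 * α ≤ |∑ j ∈ Finset.Ico k N, Y j ω|} := by
      ext ω; exact mem_C k ω
    rw [hCk]
    refine le_trans (cheb_sum hindep hL2 hmean hv _ (by positivity)) ?_
    apply ENNReal.ofReal_le_ofReal
    have hcard : ((Finset.Ico k N).card : ℝ) ≤ N := by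
      rw [Nat.card_Ico]; exact_mod_cast Nat.sub_le N k
    calc ((Finset.Ico k N).card : ℝ) * v / (2 * α) ^ 2
        = (Finset.Ico k N).card * v / (4 * α ^ 2) := by ring_nf
      _ ≤ N * v / (4 * α ^ 2) := by gcongr
  have hmain : P {ω | ∃ k ≤ N, 3 * α ≤ |Sp k ω|} ≤
      ENNReal.ofReal (N * v / α ^ 2) + ENNReal.ofReal (N * v / (4 * α ^ 2)) := by
    refine le_trans (measure_mono hsub) ?_
    refine le_trans (measure_union_le _ _) ?_
    gcongr
    · exact le_trans (cheb_sum hindep hL2 hmean hv (Finset.range N) hα) (by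
        apply ENNReal.ofReal_le_ofReal
        exact le_of_eq (by push_cast [Finset.card_range]; ring))
    · refine le_trans (measure_biUnion_finset_le _ _) ?_
      calc ∑ k ∈ Finset.range (N + 1), P (A k ∩ C k)
          = ∑ k ∈ Finset.range (N + 1), P (A k) * P (C k) := by
            exact Finset.sum_congr rfl fun k _ => hfact k
        _ ≤ ∑ k ∈ Finset.range (N + 1), P (A k) * ENNReal.ofReal (N * v / (4 * α ^ 2)) := by
            exact Finset.sum_le_sum fun k _ => mul_le_mul_right (hC_bound k) _
        _ = (∑ k ∈ Finset.range (N + 1), P (A k)) * ENNReal.ofReal (N * v / (4 * α ^ 2)) := by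
            rw [Finset.sum_mul]
        _ ≤ 1 * ENNReal.ofReal (N * v / (4 * α ^ 2)) := by
            exact mul_le_mul_left hsumA _
        _ = ENNReal.ofReal (N * v / (4 * α ^ 2)) := one_mul _
  refine le_trans hmain ?_
  have hnn1 : (0:ℝ) ≤ N * v / α ^ 2 :=
    div_nonneg (mul_nonneg (Nat.cast_nonneg N) hv0) (by positivity)
  have hnn2 : (0:ℝ) ≤ N * v / (4 * α ^ 2) :=
    div_nonneg (mul_nonneg (Nat.cast_nonneg N) hv0) (by positivity)
  rw [← ENNReal.ofReal_add hnn1 hnn2]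
  apply ENNReal.ofReal_le_ofReal
  have h4 : N * v / (4 * α ^ 2) ≤ N * v / α ^ 2 := by
    rw [show (4:ℝ) * α ^ 2 = α ^ 2 * 4 by ring, ← div_div]
    linarith [hnn1]
  have : 2 * N * v / α ^ 2 = N * v / α ^ 2 + N * v / α ^ 2 := by ring
  linarith [h4, this]

end UniformLLN

namespace UniformLLN

/-- Hoffmann–Jørgensen-type inequality combined with Etemadi/Chebyshev. -/
lemma hj {Y : ℕ → Ω → ℝ} (hY : ∀ j, Measurable (Y j))
    (hindep : iIndepFun Y P)
    (hL2 : ∀ j, MemLp (Y j) 2 P) (hmean : ∀ j, ∫ ω, Y j ω ∂P = 0)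
    {v : ℝ} (hv : ∀ j, variance (Y j) P ≤ v)
    (N : ℕ) {t : ℝ} (ht : 0 < t) :
    P {ω | ∃ k ≤ N, 3 * t ≤ |∑ j ∈ Finset.range k, Y j ω|} ≤
      (∑ j ∈ Finset.range N, P {ω | t ≤ |Y j ω|}) +
        ENNReal.ofReal (72 * N * v / t ^ 2) * ENNReal.ofReal (72 * N * v / t ^ 2) := by
  classical
  set Sp : ℕ → Ω → ℝ := fun k ω => ∑ j ∈ Finset.range k, Y j ω with hSp
  set q := P {ω | ∃ k ≤ N, t / 2 ≤ |Sp k ω|} with hq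
  have hq_bound : q ≤ ENNReal.ofReal (72 * N * v / t ^ 2) := by
    have h6 : (0:ℝ) < t / 6 := by linarith
    have := etemadi hY hindep hL2 hmean hv N h6
    have heq : {ω | ∃ k ≤ N, t / 2 ≤ |Sp k ω|} =
        {ω | ∃ k ≤ N, 3 * (t / 6) ≤ |∑ j ∈ Finset.range k, Y j ω|} := by
      ext ω
      constructor
      · rintro ⟨k, hk, h⟩; exact ⟨k, hk, by linarith⟩
      · rintro ⟨k, hk, h⟩; exact ⟨k, hk, by linarith⟩
    rw [hq, heq]
    refine le_trans this (ENNReal.ofReal_le_ofReal (le_of_eq ?_))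
    field_simp
    ring
  -- first passage events capped at 2t
  set B : ℕ → Set Ω := fun k =>
    restr Y (Finset.range k) ⁻¹'
      {w | (t ≤ |psum (Finset.range k) (Finset.range k) w| ∧
            |psum (Finset.range k) (Finset.range k) w| < 2 * t) ∧
        ∀ l < k, |psum (Finset.range k) (Finset.range l) w| < t} with hB
  have mem_B : ∀ k ω, ω ∈ B k ↔
      ((t ≤ |Sp k ω| ∧ |Sp k ω| < 2 * t) ∧ ∀ l < k, |Sp l ω| < t) := by
    intro k ω
    simp only [hB, Set.mem_preimage, Set.mem_setOf_eq]
    rw [psum_restr le_rfl]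
    constructor
    · rintro ⟨h1, h2⟩
      exact ⟨h1, fun l hl => by
        have := h2 l hl; rwa [psum_restr (Finset.range_subset_range.2 hl.le)] at this⟩
    · rintro ⟨h1, h2⟩
      exact ⟨h1, fun l hl => by
        rw [psum_restr (Finset.range_subset_range.2 hl.le)]; exact h2 l hl⟩
  have measB : ∀ k, MeasurableSet
      {w : ↥(Finset.range k) → ℝ | (t ≤ |psum (Finset.range k) (Finset.range k) w| ∧
            |psum (Finset.range k) (Finset.range k) w| < 2 * t) ∧
        ∀ l < k, |psum (Finset.range k) (Finset.range l) w| < t} := by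
    intro k
    have heq : {w : ↥(Finset.range k) → ℝ |
        (t ≤ |psum (Finset.range k) (Finset.range k) w| ∧
            |psum (Finset.range k) (Finset.range k) w| < 2 * t) ∧
        ∀ l < k, |psum (Finset.range k) (Finset.range l) w| < t} =
        ({w | t ≤ |psum (Finset.range k) (Finset.range k) w|} ∩
          {w | |psum (Finset.range k) (Finset.range k) w| < 2 * t}) ∩
          ⋂ (l : ℕ) (_ : l < k),
            {w | |psum (Finset.range k) (Finset.range l) w| < t} := by
      ext w; simp [Set.mem_iInter, and_assoc]
    rw [heq]
    exact ((measurableSet_le measurable_const (measurable_psum _ _).abs).inter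
        (measurableSet_lt (measurable_psum _ _).abs measurable_const)).inter
      (MeasurableSet.iInter fun l => MeasurableSet.iInter fun _ =>
        measurableSet_lt (measurable_psum _ _).abs measurable_const)
  -- tail events
  set D : ℕ → Set Ω := fun k =>
    restr Y (Finset.Ico k N) ⁻¹'
      {w | ∃ n, n ≤ N ∧ k < n ∧ t ≤ |psum (Finset.Ico k N) (Finset.Ico k n) w|} with hD
  have mem_D : ∀ k ω, ω ∈ D k ↔
      ∃ n, n ≤ N ∧ k < n ∧ t ≤ |∑ j ∈ Finset.Ico k n, Y j ω| := by
    intro k ω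
    simp only [hD, Set.mem_preimage, Set.mem_setOf_eq]
    constructor
    · rintro ⟨n, hnN, hkn, h⟩
      refine ⟨n, hnN, hkn, ?_⟩
      rwa [psum_restr (Finset.Ico_subset_Ico le_rfl hnN)] at h
    · rintro ⟨n, hnN, hkn, h⟩
      refine ⟨n, hnN, hkn, ?_⟩
      rwa [psum_restr (Finset.Ico_subset_Ico le_rfl hnN)]
  have measD : ∀ k, MeasurableSet
      {w : ↥(Finset.Ico k N) → ℝ |
        ∃ n, n ≤ N ∧ k < n ∧ t ≤ |psum (Finset.Ico k N) (Finset.Ico k n) w|} := by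
    intro k
    have heq : {w : ↥(Finset.Ico k N) → ℝ |
        ∃ n, n ≤ N ∧ k < n ∧ t ≤ |psum (Finset.Ico k N) (Finset.Ico k n) w|} =
        ⋃ (n : ℕ) (_ : n ≤ N ∧ k < n),
          {w | t ≤ |psum (Finset.Ico k N) (Finset.Ico k n) w|} := by
      ext w; simp [Set.mem_iUnion, and_assoc]
    rw [heq]
    exact MeasurableSet.iUnion fun n => MeasurableSet.iUnion fun _ =>
      measurableSet_le measurable_const (measurable_psum _ _).abs
  have hfact : ∀ k, P (B k ∩ D k) = P (B k) * P (D k) := by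
    intro k
    have hdisj : Disjoint (Finset.range k) (Finset.Ico k N) := by
      simp only [Finset.disjoint_left, Finset.mem_range, Finset.mem_Ico]
      omega
    exact (hindep.indepFun_finset _ _ hdisj hY).measure_inter_preimage_eq_mul
      _ _ (measB k) (measD k)
  -- inclusion
  have hsub : {ω | ∃ k ≤ N, 3 * t ≤ |Sp k ω|} ⊆
      (⋃ j ∈ Finset.range N, {ω | t ≤ |Y j ω|}) ∪
        ⋃ k ∈ Finset.range (N + 1), B k ∩ D k := by
    intro ω hω
    obtain ⟨n, hnN, hn⟩ := hω
    by_cases hbig : ∃ j < N, t ≤ |Y j ω|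
    · obtain ⟨j, hj, hjt⟩ := hbig
      exact Or.inl (Set.mem_biUnion (Finset.mem_range.2 hj) hjt)
    push_neg at hbig
    right
    have hex : ∃ k, t ≤ |Sp k ω| := ⟨n, by linarith⟩
    set k := Nat.find hex with hk
    have hkspec : t ≤ |Sp k ω| := Nat.find_spec hex
    have hkmin : ∀ l < k, |Sp l ω| < t := fun l hl => lt_of_not_ge (Nat.find_min hex hl)
    have hkn : k ≤ n := Nat.find_min' hex (by linarith)
    have hk1 : 1 ≤ k := by
      rcases Nat.eq_zero_or_pos k with h0 | h1
      · exfalso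
        have := hkspec
        rw [h0] at this
        simp only [hSp, Finset.range_zero, Finset.sum_empty, abs_zero] at this
        linarith
      · exact h1
    have hcap : |Sp k ω| < 2 * t := by
      have hstep : Sp k ω = Sp (k - 1) ω + Y (k - 1) ω := by
        rw [hSp]
        have : k = (k - 1) + 1 := by omega
        rw [this]
        simp [Finset.sum_range_succ]
      have h1 : |Sp (k - 1) ω| < t := hkmin (k - 1) (by omega)
      have h2 : |Y (k - 1) ω| < t := hbig (k - 1) (by omega)
      calc |Sp k ω| ≤ |Sp (k - 1) ω| + |Y (k - 1) ω| := by rw [hstep]; exact abs_add_le _ _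
        _ < 2 * t := by linarith
    have hkltn : k < n := by
      rcases lt_or_eq_of_le hkn with h | h
      · exact h
      · exfalso; rw [h] at hcap; linarith
    refine Set.mem_biUnion (Finset.mem_range.2 (by omega)) ⟨(mem_B k ω).2 ⟨⟨hkspec, hcap⟩, hkmin⟩, ?_⟩
    rw [mem_D]
    refine ⟨n, hnN, hkltn, ?_⟩
    have hsum : ∑ j ∈ Finset.Ico k n, Y j ω = Sp n ω - Sp k ω := by
      rw [hSp]; exact Finset.sum_Ico_eq_sub _ hkn
    rw [hsum]
    have h1 := abs_sub_abs_le_abs_sub (Sp n ω) (Sp k ω)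
    linarith
  -- D k ⊆ the sup event
  have hD_bound : ∀ k, k ≤ N → P (D k) ≤ q := by
    intro k hkN
    rw [hq]
    apply measure_mono
    intro ω hω
    obtain ⟨n, hnN, hkn, hω'⟩ := (mem_D k ω).1 hω
    have hsum : ∑ j ∈ Finset.Ico k n, Y j ω = Sp n ω - Sp k ω := by
      rw [hSp]; exact Finset.sum_Ico_eq_sub _ hkn.le
    rw [hsum] at hω'
    by_cases h : t / 2 ≤ |Sp n ω|
    · exact ⟨n, hnN, h⟩
    · refine ⟨k, hkN, ?_⟩
      push_neg at h
      have := abs_sub (Sp n ω) (Sp k ω)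
      have h2 : |Sp n ω - Sp k ω| ≤ |Sp n ω| + |Sp k ω| := abs_sub _ _
      linarith
  -- B k disjoint and total bounded by q
  have hdisjB : Set.Pairwise ↑(Finset.range (N + 1)) (Function.onFun Disjoint B) := by
    intro k _ k' _ hne
    rcases hne.lt_or_gt with hlt | hlt
    · rw [Function.onFun, Set.disjoint_left]
      intro ω h1 h2
      exact absurd ((mem_B k ω).1 h1).1.1 (not_le.2 (((mem_B k' ω).1 h2).2 k hlt))
    · rw [Function.onFun, Set.disjoint_right]
      intro ω h1 h2
      exact absurd ((mem_B k' ω).1 h1).1.1 (not_le.2 (((mem_B k ω).1 h2).2 k' hlt))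
  have hsumB : ∑ k ∈ Finset.range (N + 1), P (B k) ≤ q := by
    have measBk : ∀ k, MeasurableSet (B k) := fun k => (measurable_restr hY _) (measB k)
    rw [← measure_biUnion_finset hdisjB (fun k _ => measBk k)]
    rw [hq]
    apply measure_mono
    intro ω hω
    obtain ⟨k, hk, hωB⟩ := Set.mem_iUnion₂.1 hω
    exact ⟨k, Nat.lt_succ_iff.1 (Finset.mem_range.1 hk), by
      have := ((mem_B k ω).1 hωB).1.1; linarith⟩
  -- put it together
  calc P {ω | ∃ k ≤ N, 3 * t ≤ |Sp k ω|}
      ≤ P ((⋃ j ∈ Finset.range N, {ω | t ≤ |Y j ω|}) ∪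
          ⋃ k ∈ Finset.range (N + 1), B k ∩ D k) := measure_mono hsub
    _ ≤ P (⋃ j ∈ Finset.range N, {ω | t ≤ |Y j ω|}) +
          P (⋃ k ∈ Finset.range (N + 1), B k ∩ D k) := measure_union_le _ _
    _ ≤ (∑ j ∈ Finset.range N, P {ω | t ≤ |Y j ω|}) +
          ∑ k ∈ Finset.range (N + 1), P (B k ∩ D k) := by
        gcongr
        · exact measure_biUnion_finset_le _ _
        · exact measure_biUnion_finset_le _ _
    _ ≤ (∑ j ∈ Finset.range N, P {ω | t ≤ |Y j ω|}) + q * q := by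
        gcongr
        calc ∑ k ∈ Finset.range (N + 1), P (B k ∩ D k)
            = ∑ k ∈ Finset.range (N + 1), P (B k) * P (D k) :=
              Finset.sum_congr rfl fun k _ => hfact k
          _ ≤ ∑ k ∈ Finset.range (N + 1), P (B k) * q :=
              Finset.sum_le_sum fun k hk => mul_le_mul_right
                (hD_bound k (Nat.lt_succ_iff.1 (Finset.mem_range.1 hk))) _
          _ = (∑ k ∈ Finset.range (N + 1), P (B k)) * q := by rw [Finset.sum_mul]
          _ ≤ q * q := mul_le_mul_left hsumB _
    _ ≤ (∑ j ∈ Finset.range N, P {ω | t ≤ |Y j ω|}) +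
          ENNReal.ofReal (72 * N * v / t ^ 2) * ENNReal.ofReal (72 * N * v / t ^ 2) := by
        gcongr

end UniformLLN

namespace UniformLLN

lemma geom_sum_le (J : ℕ) : ∑ j ∈ Finset.range (J + 1), (4:ℝ≥0∞) ^ (j + 1) ≤ 16 * 4 ^ J := by
  induction J with
  | zero => norm_num
  | succ J ih =>
    rw [Finset.sum_range_succ]
    have h1 : (4:ℝ≥0∞) ^ (J + 1 + 1) = 16 * 4 ^ J := by rw [pow_add]; ring
    have h2 : (16:ℝ≥0∞) * 4 ^ (J + 1) = 64 * 4 ^ J := by rw [pow_succ]; ring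
    calc (∑ j ∈ Finset.range (J + 1), (4:ℝ≥0∞) ^ (j + 1)) + 4 ^ (J + 1 + 1)
        ≤ 16 * 4 ^ J + 16 * 4 ^ J := by rw [h1]; exact add_le_add_left ih _
      _ = 32 * 4 ^ J := by ring
      _ ≤ 64 * 4 ^ J := by gcongr <;> norm_num
      _ = 16 * 4 ^ (J + 1) := h2.symm

lemma tail_sum {Z : Ω → ℝ} (hZm : Measurable Z) (hZ : MemLp Z 2 P) {c : ℝ} (hc : 0 < c) :
    ∑' j : ℕ, (4:ℝ≥0∞) ^ (j + 1) * P {ω | c * 2 ^ j ≤ |Z ω|} ≠ ⊤ := by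
  classical
  set f : ℕ → Ω → ℝ≥0∞ := fun j ω => if c * 2 ^ j ≤ |Z ω| then (4:ℝ≥0∞) ^ (j + 1) else 0
    with hf
  have hfmeas : ∀ j, Measurable (f j) := by
    intro j
    apply Measurable.ite _ measurable_const measurable_const
    exact measurableSet_le measurable_const hZm.abs
  have hterm : ∀ j, (4:ℝ≥0∞) ^ (j + 1) * P {ω | c * 2 ^ j ≤ |Z ω|} = ∫⁻ ω, f j ω ∂P := by
    intro j
    have : f j = Set.indicator {ω | c * 2 ^ j ≤ |Z ω|} (fun _ => (4:ℝ≥0∞) ^ (j + 1)) := by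
      ext ω
      by_cases h : c * 2 ^ j ≤ |Z ω| <;> simp [hf, h, Set.indicator]
    rw [this, lintegral_indicator_const (measurableSet_le measurable_const hZm.abs)]
  have hptwise : ∀ ω, ∑' j, f j ω ≤ 16 * ENNReal.ofReal (Z ω ^ 2 / c ^ 2) := by
    intro ω
    by_cases h0 : c ≤ |Z ω|
    · -- there is a largest good j
      have hbd : ∀ j, c * 2 ^ j ≤ |Z ω| → j ≤ ⌊|Z ω| / c⌋₊ := by
        intro j hj
        have h2 : (j:ℝ) < 2 ^ j := by exact_mod_cast Nat.lt_two_pow_self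
        have : (j:ℝ) ≤ |Z ω| / c := by
          rw [le_div_iff₀ hc]
          nlinarith [hj, hc]
        exact Nat.le_floor this
      set J := Nat.findGreatest (fun j => c * 2 ^ j ≤ |Z ω|) ⌊|Z ω| / c⌋₊ with hJ
      have hJspec : c * 2 ^ J ≤ |Z ω| :=
        Nat.findGreatest_spec (P := fun j => c * 2 ^ j ≤ |Z ω|) (Nat.zero_le _)
          (show c * 2 ^ 0 ≤ |Z ω| by simpa using h0)
      have hJmax : ∀ j, J < j → ¬ (c * 2 ^ j ≤ |Z ω|) := fun j hj hcon =>
        Nat.findGreatest_is_greatest hj (hbd j hcon) hcon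
      have hsupp : ∀ j ∉ Finset.range (J + 1), f j ω = 0 := by
        intro j hj
        rw [Finset.mem_range, Nat.lt_succ_iff, not_le] at hj
        simp [hf, hJmax j hj]
      rw [tsum_eq_sum hsupp]
      have hle : ∑ j ∈ Finset.range (J + 1), f j ω ≤
          ∑ j ∈ Finset.range (J + 1), (4:ℝ≥0∞) ^ (j + 1) := by
        apply Finset.sum_le_sum
        intro j _
        by_cases h : c * 2 ^ j ≤ |Z ω| <;> simp [hf, h]
      refine le_trans hle (le_trans (geom_sum_le J) ?_)
      have h4J : (4:ℝ≥0∞) ^ J ≤ ENNReal.ofReal (Z ω ^ 2 / c ^ 2) := by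
        have hr : (4:ℝ) ^ J ≤ Z ω ^ 2 / c ^ 2 := by
          rw [le_div_iff₀ (by positivity)]
          have h2 : c * 2 ^ J ≤ |Z ω| := hJspec
          have : (c * 2 ^ J) ^ 2 ≤ |Z ω| ^ 2 := by
            apply sq_le_sq' <;> nlinarith [abs_nonneg (Z ω), hc, pow_pos (show (0:ℝ) < 2 by norm_num) J]
          have h4 : ((2:ℝ) ^ J) ^ 2 = 4 ^ J := by
            rw [← pow_mul, mul_comm J 2, pow_mul]
            norm_num
          calc (4:ℝ) ^ J * c ^ 2 = ((2:ℝ) ^ J) ^ 2 * c ^ 2 := by rw [h4]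
              _ = (c * 2 ^ J) ^ 2 := by ring
              _ ≤ |Z ω| ^ 2 := this
              _ = Z ω ^ 2 := sq_abs _
        calc (4:ℝ≥0∞) ^ J = ENNReal.ofReal ((4:ℝ) ^ J) := by
              rw [ENNReal.ofReal_pow (by norm_num)]
              norm_num
          _ ≤ ENNReal.ofReal (Z ω ^ 2 / c ^ 2) := ENNReal.ofReal_le_ofReal hr
      exact mul_le_mul_right h4J 16
    · -- no good j at all
      have : ∀ j, f j ω = 0 := by
        intro j
        have : ¬ (c * 2 ^ j ≤ |Z ω|) := by
          push_neg at h0 ⊢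
          have h1 : (1:ℝ) ≤ 2 ^ j := one_le_pow₀ (by norm_num)
          nlinarith
        simp [hf, this]
      simp [this]
  have hlin : ∑' j, ∫⁻ ω, f j ω ∂P = ∫⁻ ω, ∑' j, f j ω ∂P :=
    (lintegral_tsum (fun j => (hfmeas j).aemeasurable)).symm
  have hfin : ∫⁻ ω, 16 * ENNReal.ofReal (Z ω ^ 2 / c ^ 2) ∂P ≠ ⊤ := by
    have hint : Integrable (fun ω => Z ω ^ 2 / c ^ 2) P := by
      have := hZ.integrable_sq
      exact this.div_const _
    have := hint.2
    rw [lintegral_const_mul 16 (by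
      apply ENNReal.measurable_ofReal.comp
      exact (hZm.pow_const 2).div_const _)]
    refine ENNReal.mul_ne_top (by norm_num) ?_
    rw [HasFiniteIntegral] at this
    refine ne_of_lt (lt_of_le_of_lt (lintegral_mono fun ω => le_of_eq ?_) this)
    rw [← ofReal_norm, Real.norm_of_nonneg (by positivity : (0:ℝ) ≤ Z ω ^ 2 / c ^ 2)]
  refine ne_top_of_le_ne_top hfin ?_
  calc ∑' j, (4:ℝ≥0∞) ^ (j + 1) * P {ω | c * 2 ^ j ≤ |Z ω|}
      = ∑' j, ∫⁻ ω, f j ω ∂P := tsum_congr fun j => hterm j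
    _ = ∫⁻ ω, ∑' j, f j ω ∂P := hlin
    _ ≤ ∫⁻ ω, 16 * ENNReal.ofReal (Z ω ^ 2 / c ^ 2) ∂P := lintegral_mono hptwise

end UniformLLN

namespace UniformLLN

lemma row_bad_summable
    {X : ℕ → ℕ → Ω → ℝ} (hmeas : ∀ i j, Measurable (X i j))
    (hindep : iIndepFun (fun (p : ℕ × ℕ) ω => X p.1 p.2 ω) P)
    (hident : ∀ i j, P.map (X i j) = P.map (X 0 0))
    (hL2 : MemLp (X 0 0) 2 P)
    (m : ℝ) (hm : ∫ ω, X 0 0 ω ∂P = m) {ε : ℝ} (hε : 0 < ε) :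
    ∑' i : ℕ, P {ω | ∃ k, 1 ≤ k ∧ i ≤ k ∧
      ε * k ≤ |∑ j ∈ Finset.range k, (X i j ω - m)|} ≠ ⊤ := by
  classical
  set Z : Ω → ℝ := fun ω => X 0 0 ω - m with hZ
  have hZmeas : Measurable Z := (hmeas 0 0).sub measurable_const
  have hZL2 : MemLp Z 2 P := hL2.sub (memLp_const m)
  set v : ℝ := variance Z P with hvdef
  have hv0 : 0 ≤ v := variance_nonneg _ _
  have idd : ∀ i j, IdentDistrib (X i j) (X 0 0) P P := fun i j =>
    ⟨(hmeas i j).aemeasurable, (hmeas 0 0).aemeasurable, hident i j⟩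
  have iddY : ∀ i j, IdentDistrib (fun ω => X i j ω - m) Z P P := fun i j =>
    (idd i j).comp (measurable_id.sub measurable_const)
  -- per-row hypotheses
  have hYmeas : ∀ i j, Measurable (fun ω => X i j ω - m) :=
    fun i j => (hmeas i j).sub measurable_const
  have hYindep : ∀ i, iIndepFun (fun j ω => X i j ω - m) P := by
    intro i
    have h1 : iIndepFun (fun j ω => X i j ω) P :=
      iIndepFun_comp_injective hindep (fun j => ((i, j) : ℕ × ℕ))
        (fun a b hab => by simpa using hab)
    exact h1.comp (fun _ x => x - m) (fun _ => measurable_id.sub measurable_const)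
  have hYL2 : ∀ i j, MemLp (fun ω => X i j ω - m) 2 P :=
    fun i j => (iddY i j).symm.memLp_snd hZL2
  have hYmean : ∀ i j, ∫ ω, (X i j ω - m) ∂P = 0 := by
    intro i j
    have hint : Integrable (X i j) P := ((idd i j).symm.memLp_snd hL2).integrable one_le_two
    have h1 : ∫ ω, (X i j ω - m) ∂P = (∫ ω, X i j ω ∂P) - ∫ _ω, m ∂P :=
      integral_sub hint (integrable_const m)
    rw [h1, (idd i j).integral_eq, hm]
    simp
  have hYvar : ∀ i j, variance (fun ω => X i j ω - m) P ≤ v :=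
    fun i j => le_of_eq ((iddY i j).variance_eq)
  -- tail probabilities are identical
  have tail_eq : ∀ i l (t : ℝ), P {ω | t ≤ |X i l ω - m|} = P {ω | t ≤ |Z ω|} := by
    intro i l t
    have hset : MeasurableSet {x : ℝ | t ≤ |x - m|} :=
      measurableSet_le measurable_const ((measurable_id.sub measurable_const).abs)
    have h1 : {ω | t ≤ |X i l ω - m|} = X i l ⁻¹' {x | t ≤ |x - m|} := rfl
    have h2 : {ω | t ≤ |Z ω|} = X 0 0 ⁻¹' {x | t ≤ |x - m|} := rfl
    rw [h1, h2, ← Measure.map_apply (hmeas i l) hset, ← Measure.map_apply (hmeas 0 0) hset,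
      hident i l]
  set K : ℝ := 1296 * v / ε ^ 2 with hK
  have hK0 : 0 ≤ K := by positivity
  set G : ℕ → ℝ≥0∞ := fun j => P {ω | ε / 3 * 2 ^ j ≤ |Z ω|} with hG
  set c : ℕ → ℝ≥0∞ := fun j => ((2 ^ (j + 1) : ℕ) : ℝ≥0∞) * G j +
    ENNReal.ofReal (K * (1 / 2) ^ j) * ENNReal.ofReal (K * (1 / 2) ^ j) with hc
  -- the block bound
  have hEbound : ∀ i j, P {ω | ∃ k ≤ 2 ^ (j + 1),
      3 * (ε / 3 * 2 ^ j) ≤ |∑ l ∈ Finset.range k, (X i l ω - m)|} ≤ c j := by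
    intro i j
    have ht : (0:ℝ) < ε / 3 * 2 ^ j := by positivity
    refine le_trans (hj (hYmeas i) (hYindep i) (hYL2 i) (hYmean i) (hYvar i)
      (2 ^ (j + 1)) ht) ?_
    rw [hc]
    have harg : 72 * ((2 ^ (j + 1) : ℕ) : ℝ) * v / (ε / 3 * 2 ^ j) ^ 2 = K * (1 / 2) ^ j := by
      rw [hK]
      push_cast
      rw [pow_succ]
      field_simp
      have h12 : (1 / 2 : ℝ) ^ j * 2 ^ j = 1 := by rw [← mul_pow]; norm_num
      linear_combination (-(v * 1296)) * h12
    refine add_le_add (le_of_eq ?_) (le_of_eq (by rw [harg]))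
    calc ∑ l ∈ Finset.range (2 ^ (j + 1)), P {ω | ε / 3 * 2 ^ j ≤ |X i l ω - m|}
        = ∑ l ∈ Finset.range (2 ^ (j + 1)), G j := by
          exact Finset.sum_congr rfl fun l _ => tail_eq i l _
      _ = ((2 ^ (j + 1) : ℕ) : ℝ≥0∞) * G j := by
          rw [Finset.sum_const, Finset.card_range, nsmul_eq_mul]
  -- the covering of the bad set by dyadic blocks
  have hBadBound : ∀ i : ℕ, P {ω | ∃ k, 1 ≤ k ∧ i ≤ k ∧
      ε * k ≤ |∑ j ∈ Finset.range k, (X i j ω - m)|} ≤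
      ∑' j : ℕ, (if i < 2 ^ (j + 1) then c j else 0) := by
    intro i
    have hsub : {ω | ∃ k, 1 ≤ k ∧ i ≤ k ∧
        ε * k ≤ |∑ j ∈ Finset.range k, (X i j ω - m)|} ⊆
        ⋃ (j : ℕ) (_ : i < 2 ^ (j + 1)),
          {ω | ∃ k ≤ 2 ^ (j + 1),
            3 * (ε / 3 * 2 ^ j) ≤ |∑ l ∈ Finset.range k, (X i l ω - m)|} := by
      rintro ω ⟨k, hk1, hik, hk⟩
      set j := Nat.log 2 k with hj'
      have h1 : 2 ^ j ≤ k := Nat.pow_log_le_self 2 (by omega)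
      have h2 : k < 2 ^ (j + 1) := Nat.lt_pow_succ_log_self (by norm_num) k
      refine Set.mem_iUnion₂.2 ⟨j, lt_of_le_of_lt hik h2, k, h2.le, ?_⟩
      have hcast : ((2:ℝ) ^ j) ≤ (k:ℝ) := by exact_mod_cast h1
      calc 3 * (ε / 3 * 2 ^ j) = ε * 2 ^ j := by ring
        _ ≤ ε * k := by nlinarith
        _ ≤ |∑ l ∈ Finset.range k, (X i l ω - m)| := hk
    refine le_trans (measure_mono hsub) (le_trans (measure_iUnion_le _) ?_)
    refine ENNReal.tsum_le_tsum fun j => ?_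
    rw [Set.iUnion_eq_if]
    by_cases h : i < 2 ^ (j + 1)
    · rw [if_pos h, if_pos h]
      exact hEbound i j
    · rw [if_neg h, if_neg h]
      simp
  refine ne_top_of_le_ne_top ?_ (ENNReal.tsum_le_tsum hBadBound)
  rw [ENNReal.tsum_comm]
  have hinner : ∀ j : ℕ, ∑' i : ℕ, (if i < 2 ^ (j + 1) then c j else 0) =
      ((2 ^ (j + 1) : ℕ) : ℝ≥0∞) * c j := by
    intro j
    have h1 : ∑' i : ℕ, (if i < 2 ^ (j + 1) then c j else 0) =
        ∑ i ∈ Finset.range (2 ^ (j + 1)), (if i < 2 ^ (j + 1) then c j else 0) :=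
      tsum_eq_sum (fun i hi => if_neg (Finset.mem_range.not.1 hi))
    have h2 : ∑ i ∈ Finset.range (2 ^ (j + 1)), (if i < 2 ^ (j + 1) then c j else 0) =
        ∑ _i ∈ Finset.range (2 ^ (j + 1)), c j :=
      Finset.sum_congr rfl (fun i hi => if_pos (Finset.mem_range.1 hi))
    rw [h1, h2, Finset.sum_const, Finset.card_range, nsmul_eq_mul]
  rw [tsum_congr hinner]
  -- split the sum
  have hsplit : ∀ j : ℕ, ((2 ^ (j + 1) : ℕ) : ℝ≥0∞) * c j =
      (4:ℝ≥0∞) ^ (j + 1) * G j + ENNReal.ofReal (2 * K ^ 2 * (1 / 2) ^ j) := by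
    intro j
    rw [hc, mul_add]
    congr 1
    · rw [← mul_assoc]
      congr 1
      push_cast
      rw [← mul_pow]
      norm_num
    · rw [← ENNReal.ofReal_mul (by positivity), show ((2 ^ (j + 1) : ℕ) : ℝ≥0∞) =
        ENNReal.ofReal ((2:ℝ) ^ (j + 1)) by
          rw [ENNReal.ofReal_pow (by norm_num)]
          push_cast
          norm_num,
        ← ENNReal.ofReal_mul (by positivity)]
      congr 1
      have hpow : ((1 / 2:ℝ) ^ j) ^ 2 = ((1 / 2:ℝ) ^ 2) ^ j := pow_right_comm _ _ _
      calc (2:ℝ) ^ (j + 1) * (K * (1 / 2) ^ j * (K * (1 / 2) ^ j))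
          = 2 * K ^ 2 * (2 ^ j * ((1 / 2) ^ j) ^ 2) := by rw [pow_succ]; ring
        _ = 2 * K ^ 2 * (2 ^ j * ((1 / 2:ℝ) ^ 2) ^ j) := by rw [hpow]
        _ = 2 * K ^ 2 * ((2 * (1 / 2:ℝ) ^ 2)) ^ j := by rw [mul_pow]
        _ = 2 * K ^ 2 * (1 / 2) ^ j := by norm_num
  rw [tsum_congr hsplit, ENNReal.tsum_add]
  refine ENNReal.add_ne_top.2 ⟨?_, ?_⟩
  · exact tail_sum hZmeas hZL2 (by positivity : (0:ℝ) < ε / 3)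
  · rw [← ENNReal.ofReal_tsum_of_nonneg (fun j => by positivity)
      ((summable_geometric_two).mul_left _)]
    exact ENNReal.ofReal_ne_top

end UniformLLN

end AuxiliaryLemmas

/-- uniform law of large numbers for inverses: if `(X_{i,j})` is an i.i.d.
array of real random variables with mean `m ≠ 0` and finite variance, and
`S_{i,n} = X_{i,1}+⋯+X_{i,n}`, then almost surely `max_{1≤i≤n} |n/S_{i,n} - 1/m| → 0` as
`n → ∞`; in particular, almost surely, for all large `n` all the sums `S_{1,n},…,S_{n,n}`
are nonzero. -/
theorem uniform_lln_inverse
    {Ω : Type*} [MeasurableSpace Ω] (P : Measure Ω) [IsProbabilityMeasure P]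
    (X : ℕ → ℕ → Ω → ℝ) (hmeas : ∀ i j, Measurable (X i j))
    (hindep : iIndepFun (fun (p : ℕ × ℕ) ω => X p.1 p.2 ω) P)
    (hident : ∀ i j, P.map (X i j) = P.map (X 0 0))
    (hL2 : MemLp (X 0 0) 2 P)
    (m : ℝ) (hm : ∫ ω, X 0 0 ω ∂P = m) (hm0 : m ≠ 0) :
    ∀ᵐ ω ∂P, ∀ ε > (0 : ℝ), ∃ N : ℕ, ∀ n ≥ N, ∀ i < n,
      (∑ j ∈ Finset.range n, X i j ω) ≠ 0 ∧
      |(n : ℝ) / (∑ j ∈ Finset.range n, X i j ω) - 1 / m| < ε := by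
    classical
  have idd : ∀ i j, IdentDistrib (X i j) (X 0 0) P P := fun i j =>
    ⟨(hmeas i j).aemeasurable, (hmeas 0 0).aemeasurable, hident i j⟩
  -- strong law for each row
  have hSLLN : ∀ᵐ ω ∂P, ∀ i : ℕ,
      Tendsto (fun n : ℕ => (∑ j ∈ Finset.range n, X i j ω) / n) atTop (𝓝 m) := by
    rw [ae_all_iff]
    intro i
    have hint : Integrable (X i 0) P := ((idd i 0).symm.memLp_snd hL2).integrable one_le_two
    have hpair : Pairwise (Function.onFun (IndepFun · · P) (fun j => X i j)) := by
      intro j j' hne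
      exact hindep.indepFun (show ((i, j) : ℕ × ℕ) ≠ (i, j') by simp [hne])
    have hid : ∀ j, IdentDistrib (X i j) (X i 0) P P :=
      fun j => (idd i j).trans (idd i 0).symm
    have h1 := strong_law_ae_real (fun j => X i j) hint hpair hid
    have hmean : P[X i 0] = m := by rw [(idd i 0).integral_eq]; exact hm
    rwa [hmean] at h1
  -- Borel–Cantelli for bad rows
  have hBC : ∀ᵐ ω ∂P, ∀ q : ℕ, ∀ᶠ i : ℕ in atTop,
      ω ∉ {ω' | ∃ k, 1 ≤ k ∧ i ≤ k ∧
        (1 / ((q : ℝ) + 1)) * k ≤ |∑ j ∈ Finset.range k, (X i j ω' - m)|} := by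
    rw [ae_all_iff]
    intro q
    exact ae_eventually_notMem
      (UniformLLN.row_bad_summable hmeas hindep hident hL2 m hm
        (by positivity : (0:ℝ) < 1 / ((q : ℝ) + 1)))
  filter_upwards [hSLLN, hBC] with ω hω1 hω2
  intro ε hε
  have habs : (0:ℝ) < |m| := abs_pos.2 hm0
  have hm2 : (0:ℝ) < m ^ 2 := by nlinarith [sq_abs m]
  set δ := min (|m| / 2) (ε * m ^ 2 / 4) with hδdef
  have hδ0 : 0 < δ := lt_min (by linarith) (by positivity)
  obtain ⟨q, hq⟩ := exists_nat_one_div_lt hδ0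
  obtain ⟨I, hI⟩ := eventually_atTop.1 (hω2 q)
  have hrow : ∀ i, ∃ Ni, ∀ n ≥ Ni,
      |(∑ j ∈ Finset.range n, X i j ω) / n - m| < δ := by
    intro i
    obtain ⟨Ni, hNi⟩ := (Metric.tendsto_atTop.1 (hω1 i)) δ hδ0
    exact ⟨Ni, fun n hn => by have := hNi n hn; rwa [Real.dist_eq] at this⟩
  choose Ni hNi using hrow
  refine ⟨max (I + 1) (1 + (Finset.range I).sup Ni), fun n hn i hin => ?_⟩
  have hnI : I + 1 ≤ n := le_trans (le_max_left _ _) hn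
  have hn1 : 1 ≤ n := by omega
  have hnpos : (0:ℝ) < n := by exact_mod_cast hn1
  -- the key estimate
  have hkey : |(∑ j ∈ Finset.range n, X i j ω) / n - m| < δ := by
    by_cases hiI : i < I
    · refine hNi i n (le_trans ?_ hn)
      calc Ni i ≤ (Finset.range I).sup Ni := Finset.le_sup (Finset.mem_range.2 hiI)
        _ ≤ 1 + (Finset.range I).sup Ni := by omega
        _ ≤ max (I + 1) (1 + (Finset.range I).sup Ni) := le_max_right _ _
    · push_neg at hiI
      have hnot := hI i hiI
      have hne : ¬ ((1 / ((q : ℝ) + 1)) * n ≤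
          |∑ j ∈ Finset.range n, (X i j ω - m)|) := by
        intro hcon
        exact hnot ⟨n, hn1, hin.le, hcon⟩
      push_neg at hne
      have hsum : ∑ j ∈ Finset.range n, (X i j ω - m) =
          (∑ j ∈ Finset.range n, X i j ω) - n * m := by
        rw [Finset.sum_sub_distrib, Finset.sum_const, Finset.card_range, nsmul_eq_mul]
      rw [hsum] at hne
      have heq : (∑ j ∈ Finset.range n, X i j ω) / n - m =
          ((∑ j ∈ Finset.range n, X i j ω) - n * m) / n := by
        field_simp
      rw [heq, abs_div, abs_of_pos hnpos, div_lt_iff₀ hnpos]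
      calc |(∑ j ∈ Finset.range n, X i j ω) - n * m| < (1 / ((q : ℝ) + 1)) * n := hne
        _ ≤ δ * n := by nlinarith
  -- algebra
  set T := ∑ j ∈ Finset.range n, X i j ω with hT
  set a := T / n with ha'
  have hδm : δ ≤ |m| / 2 := min_le_left _ _
  have hδε : δ ≤ ε * m ^ 2 / 4 := min_le_right _ _
  have ham : |m| / 2 ≤ |a| := by
    have h1 : |m| - |a| ≤ |a - m| := by
      have := abs_sub_abs_le_abs_sub m a
      rwa [abs_sub_comm] at this
    linarith [hkey]
  have ha0 : a ≠ 0 := by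
    intro h
    rw [h, abs_zero] at ham
    linarith
  have hT0 : T ≠ 0 := by
    intro h
    exact ha0 (by rw [ha', h, zero_div])
  refine ⟨hT0, ?_⟩
  have hnT : (n:ℝ) / T = 1 / a := by
    rw [ha', one_div_div]
  rw [hnT]
  have hdiff : 1 / a - 1 / m = (m - a) / (a * m) := by
    field_simp
  rw [hdiff, abs_div, abs_mul]
  have hd : (0:ℝ) < |a| * |m| := mul_pos (abs_pos.2 ha0) habs
  rw [div_lt_iff₀ hd]
  have h1 : |m - a| < δ := by rw [abs_sub_comm]; exact hkey
  have h2 : |m| ^ 2 = m ^ 2 := sq_abs m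
  nlinarith [mul_le_mul_of_nonneg_right ham habs.le, hε, hδε, h1,
    mul_le_mul_of_nonneg_left ham (le_of_lt hε)]
end
end

section
/- Let (X_{i,j})_{i,j≥1} be an infinite array of i.i.d. exponential random variables of rate 1, and set S_{i,n} = X_{i,1}+⋯+X_{i,n}. Then almost surely, (1/n)∑_{i=1}^n log(n/S_{i,n}) → 0 as n → ∞. Equivalently, if D^{(n)} is the n×n diagonal matrix with entries D^{(n)}_{i,i} = 1/S_{i,n}, then almost surely (1/n)·log|det(n·D^{(n)})| → 0. -/
open MeasureTheory ProbabilityTheory Filter Topology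

noncomputable section

open Real Set
open scoped ENNReal NNReal

lemma my_iIndepFun_precomp {ι ι' Ω β : Type*} [MeasurableSpace Ω] [mβ : MeasurableSpace β]
    {μ : Measure Ω} {f : ι → Ω → β} (h : iIndepFun f μ)
    {g : ι' → ι} (hg : Function.Injective g) :
    iIndepFun (fun i => f (g i)) μ := by
  classical
  rw [iIndepFun_iff_measure_inter_preimage_eq_mul] at h ⊢
  intro S sets hsets
  have key := h (S.map ⟨g, hg⟩)
    (sets := fun i => ⋂ j ∈ S.filter (fun j => g j = i), sets j) ?_
  · have hfilter : ∀ j ∈ S, S.filter (fun j' => g j' = g j) = {j} := by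
      intro j hj
      ext j'
      simp only [Finset.mem_filter, Finset.mem_singleton, hg.eq_iff]
      exact ⟨fun h => h.2, fun h => ⟨h ▸ hj, h⟩⟩
    have hsets' : ∀ j ∈ S, (⋂ j' ∈ S.filter (fun j' => g j' = g j), sets j') = sets j := by
      intro j hj
      rw [hfilter j hj]
      simp
    rw [Finset.map_eq_image] at key
    simp only [Function.Embedding.coeFn_mk] at key
    rw [Finset.set_biInter_finset_image, Finset.prod_image (fun a _ b _ hab => hg hab)] at key
    calc μ (⋂ i ∈ S, (f (g i)) ⁻¹' sets i)
        = μ (⋂ i ∈ S, (f (g i)) ⁻¹' (⋂ j' ∈ S.filter (fun j' => g j' = g i), sets j')) := by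
          congr 1; exact Set.iInter₂_congr (fun j hj => by rw [hsets' j hj])
      _ = ∏ i ∈ S, μ ((f (g i)) ⁻¹' (⋂ j' ∈ S.filter (fun j' => g j' = g i), sets j')) := key
      _ = ∏ i ∈ S, μ ((f (g i)) ⁻¹' sets i) :=
          Finset.prod_congr rfl (fun j hj => by rw [hsets' j hj])
  · intro i _
    exact MeasurableSet.biInter (S.filter _).countable_toSet
      (fun j hj => hsets j (Finset.mem_filter.mp hj).1)

lemma epr_eq (x : ℝ) : exponentialPDFReal 1 x = if 0 ≤ x then exp (-x) else 0 := by
  rw [exponentialPDFReal, gammaPDFReal]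
  simp [Real.Gamma_one]

lemma epr_mul_eq (t : ℝ) (x : ℝ) :
    exponentialPDFReal 1 x * exp (t * x) =
      Set.indicator (Ici 0) (fun x => exp (-((1 - t) * x))) x := by
  rw [epr_eq]
  by_cases hx : 0 ≤ x
  · rw [if_pos hx, Set.indicator_of_mem (Set.mem_Ici.mpr hx), ← Real.exp_add]
    ring_nf
  · rw [if_neg hx, Set.indicator_of_notMem (by simpa using hx), zero_mul]

lemma expMeasure_eq_withDensity :
    expMeasure 1 = volume.withDensity (fun x => ((exponentialPDFReal 1 x).toNNReal : ℝ≥0∞)) := by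
  rfl

lemma meas_toNNReal : Measurable (fun x => (exponentialPDFReal 1 x).toNNReal) :=
  (measurable_exponentialPDFReal 1).real_toNNReal

lemma smul_eq_indicator (t : ℝ) (x : ℝ) :
    (exponentialPDFReal 1 x).toNNReal • exp (t * x) =
      Set.indicator (Ici 0) (fun x => exp (-((1 - t) * x))) x := by
  rw [NNReal.smul_def, ← epr_mul_eq]
  congr 1
  exact Real.coe_toNNReal _ (exponentialPDFReal_nonneg one_pos x)

lemma integrable_exp_expMeasure {t : ℝ} (ht : t < 1) :
    Integrable (fun x => exp (t * x)) (expMeasure 1) := by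
  rw [expMeasure_eq_withDensity, integrable_withDensity_iff_integrable_smul meas_toNNReal]
  simp_rw [smul_eq_indicator t]
  rw [integrable_indicator_iff measurableSet_Ici]
  refine Iff.mpr integrableOn_Ici_iff_integrableOn_Ioi ?_
  have h := exp_neg_integrableOn_Ioi 0 (b := 1 - t) (by linarith)
  convert h using 2 with x
  case e'_6 => ring_nf
  all_goals rfl

lemma integral_exp_expMeasure {t : ℝ} (ht : t < 1) :
    ∫ x, exp (t * x) ∂(expMeasure 1) = (1 - t)⁻¹ := by
  rw [expMeasure_eq_withDensity, integral_withDensity_eq_integral_smul meas_toNNReal]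
  simp_rw [smul_eq_indicator t]
  rw [integral_indicator measurableSet_Ici, MeasureTheory.integral_Ici_eq_integral_Ioi]
  have h := integral_rpow_mul_exp_neg_mul_Ioi (a := 1) (r := 1 - t) one_pos (by linarith)
  simp only [sub_self, Real.rpow_zero, one_mul, Real.rpow_one, Real.Gamma_one, mul_one] at h
  rw [h, one_div]

theorem chernoff_tail {Ω : Type*} [MeasurableSpace Ω] (P : Measure Ω) [IsProbabilityMeasure P]
    (Y : ℕ → Ω → ℝ) (hmeas : ∀ j, Measurable (Y j))
    (hind : iIndepFun Y P)
    (hlaw : ∀ j, P.map (Y j) = expMeasure 1)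
    {δ : ℝ} (h0 : 0 < δ) (h1 : δ ≤ 1) (n : ℕ) :
    P {ω | (n:ℝ)*(1+δ) ≤ ∑ j ∈ Finset.range n, Y j ω} ≤ ENNReal.ofReal (exp (-(n:ℝ)*(δ^2/8)))
    ∧ P {ω | ∑ j ∈ Finset.range n, Y j ω ≤ (n:ℝ)*(1-δ)} ≤ ENNReal.ofReal (exp (-(n:ℝ)*(δ^2/8))) := by
  have hint : ∀ t : ℝ, t < 1 → ∀ j, Integrable (fun ω => exp (t * Y j ω)) P := by
    intro t ht j
    have h := (integrable_map_measure
      (f := Y j) (g := fun x => exp (t * x))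
      (by rw [hlaw j]; exact (integrable_exp_expMeasure ht).aestronglyMeasurable)
      (hmeas j).aemeasurable).mp (by rw [hlaw j]; exact integrable_exp_expMeasure ht)
    exact h
  have hmgf : ∀ t : ℝ, t < 1 → ∀ j, mgf (Y j) P t = (1 - t)⁻¹ := by
    intro t ht j
    have h := integral_map (hmeas j).aemeasurable
      (f := fun x => exp (t * x)) (by
        rw [hlaw j]
        exact (integrable_exp_expMeasure ht).aestronglyMeasurable)
    rw [mgf, ← h, hlaw j, integral_exp_expMeasure ht]
  have hSmgf : ∀ t : ℝ, t < 1 → mgf (∑ j ∈ Finset.range n, Y j) P t = ((1 - t)⁻¹)^n := by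
    intro t ht
    rw [hind.mgf_sum hmeas]
    rw [Finset.prod_congr rfl (fun j _ => hmgf t ht j), Finset.prod_const, Finset.card_range]
  have hSint : ∀ t : ℝ, t < 1 → Integrable (fun ω => exp (t * (∑ j ∈ Finset.range n, Y j) ω)) P :=
    fun t ht => hind.integrable_exp_mul_sum hmeas (fun j _ => hint t ht j)
  constructor
  · -- upper tail with t = δ/4
    have ht1 : δ/4 < 1 := by linarith
    have hch := measure_ge_le_exp_mul_mgf (μ := P) (X := ∑ j ∈ Finset.range n, Y j)
      ((n:ℝ)*(1+δ)) (by positivity) (hSint _ ht1)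
    rw [hSmgf _ ht1] at hch
    have hexp : exp (-(δ/4) * ((n:ℝ)*(1+δ))) * ((1 - δ/4)⁻¹)^n ≤ exp (-(n:ℝ)*(δ^2/8)) := by
      have h₁ : (0:ℝ) < 1 - δ/4 := by linarith
      have hL : Real.log (1 - δ/4)⁻¹ ≤ δ/4 + 2*(δ/4)^2 := by
        have h2 := Real.log_le_sub_one_of_pos (inv_pos.mpr h₁)
        have h3 : (1 - δ/4)⁻¹ - 1 ≤ δ/4 + 2*(δ/4)^2 := by
          rw [inv_eq_one_div, div_sub_one h₁.ne', div_le_iff₀ h₁]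
          nlinarith
        linarith
      rw [← Real.exp_log (inv_pos.mpr h₁), ← Real.exp_nat_mul, ← Real.exp_add]
      apply Real.exp_le_exp.mpr
      have hn : (0:ℝ) ≤ (n:ℝ) := Nat.cast_nonneg n
      nlinarith [mul_le_mul_of_nonneg_left hL hn]
    have hset : {ω | (n:ℝ)*(1+δ) ≤ ∑ j ∈ Finset.range n, Y j ω}
        = {ω | (n:ℝ)*(1+δ) ≤ (∑ j ∈ Finset.range n, Y j) ω} := by
      ext ω; simp [Finset.sum_apply]
    rw [hset]
    rw [← ENNReal.ofReal_toReal (measure_ne_top P _)]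
    exact ENNReal.ofReal_le_ofReal (hch.trans hexp)
  · -- lower tail with t = -δ/2
    have ht1 : -(δ/2) ≤ 0 := by linarith
    have hch := measure_le_le_exp_mul_mgf (μ := P) (X := ∑ j ∈ Finset.range n, Y j)
      ((n:ℝ)*(1-δ)) ht1 (hSint _ (by linarith))
    rw [hSmgf _ (by linarith)] at hch
    have hexp : exp (-(-(δ/2)) * ((n:ℝ)*(1-δ))) * ((1 - -(δ/2))⁻¹)^n ≤ exp (-(n:ℝ)*(δ^2/8)) := by
      have h₁ : (0:ℝ) < 1 + δ/2 := by linarith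
      have hL : Real.log (1 + δ/2)⁻¹ ≤ (1 + δ/2)⁻¹ - 1 :=
        Real.log_le_sub_one_of_pos (inv_pos.mpr h₁)
      have hinv : (1 + δ/2)⁻¹ - 1 = -(δ/2)/(1 + δ/2) := by
        rw [inv_eq_one_div, div_sub_one h₁.ne', neg_div]
        ring_nf
      have hkey : (δ/2) * (1-δ) + (-(δ/2)/(1+δ/2)) ≤ -(δ^2/8) := by
        rw [← sub_nonneg]
        have : -(δ^2/8) - ((δ/2) * (1-δ) + (-(δ/2)/(1+δ/2))) =
            ((δ/2)/(1+δ/2)) - (δ^2/8 + (δ/2)*(1-δ)) := by ring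
        rw [this, sub_nonneg, le_div_iff₀ h₁]
        nlinarith
      have hrw : (1:ℝ) - -(δ/2) = 1 + δ/2 := by ring
      rw [hrw, ← Real.exp_log (inv_pos.mpr h₁), ← Real.exp_nat_mul, ← Real.exp_add]
      apply Real.exp_le_exp.mpr
      have hn : (0:ℝ) ≤ (n:ℝ) := Nat.cast_nonneg n
      have h5 := mul_le_mul_of_nonneg_left (hL.trans_eq hinv) hn
      nlinarith [mul_le_mul_of_nonneg_left hkey hn]
    have hset : {ω | ∑ j ∈ Finset.range n, Y j ω ≤ (n:ℝ)*(1-δ)}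
        = {ω | (∑ j ∈ Finset.range n, Y j) ω ≤ (n:ℝ)*(1-δ)} := by
      ext ω; simp [Finset.sum_apply]
    rw [hset]
    rw [← ENNReal.ofReal_toReal (measure_ne_top P _)]
    exact ENNReal.ofReal_le_ofReal (hch.trans hexp)

lemma det_bound {δ : ℝ} (h0 : 0 < δ) (h2 : δ ≤ 1/2) {n : ℕ} (hn : 1 ≤ n) {T : ℕ → ℝ}
    (hT : ∀ i < n, (n:ℝ)*(1-δ) < T i ∧ T i < (n:ℝ)*(1+δ)) :
    |(1/(n:ℝ)) * ∑ i ∈ Finset.range n, Real.log ((n:ℝ) / T i)| ≤ 2*δ := by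
  have hnpos : (0:ℝ) < n := by exact_mod_cast hn
  have hterm : ∀ i < n, |Real.log ((n:ℝ) / T i)| ≤ 2*δ := by
    intro i hi
    obtain ⟨hlo, hhi⟩ := hT i hi
    have hTpos : 0 < T i := lt_trans (by nlinarith) hlo
    have hx : (0:ℝ) < (n:ℝ) / T i := by positivity
    rw [abs_le]
    constructor
    · -- lower: -2δ ≤ log(n/T) ⟸ log(T/n) ≤ 2δ
      have : Real.log (T i / (n:ℝ)) ≤ T i / (n:ℝ) - 1 :=
        Real.log_le_sub_one_of_pos (by positivity)
      have h4 : T i / (n:ℝ) - 1 ≤ 2*δ := by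
        rw [div_sub_one hnpos.ne', div_le_iff₀ hnpos]; nlinarith
      have h5 : Real.log ((n:ℝ) / T i) = - Real.log (T i / (n:ℝ)) := by
        rw [← Real.log_inv]; congr 1; field_simp
      linarith
    · have : Real.log ((n:ℝ) / T i) ≤ (n:ℝ) / T i - 1 := Real.log_le_sub_one_of_pos hx
      have h4 : (n:ℝ) / T i - 1 ≤ 2*δ := by
        rw [div_sub_one hTpos.ne', div_le_iff₀ hTpos]; nlinarith
      linarith
  calc |(1/(n:ℝ)) * ∑ i ∈ Finset.range n, Real.log ((n:ℝ) / T i)|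
      = (1/(n:ℝ)) * |∑ i ∈ Finset.range n, Real.log ((n:ℝ) / T i)| := by
        rw [abs_mul, abs_of_nonneg (by positivity : (0:ℝ) ≤ 1/(n:ℝ))]
    _ ≤ (1/(n:ℝ)) * ∑ i ∈ Finset.range n, |Real.log ((n:ℝ) / T i)| := by
        gcongr
        exact Finset.abs_sum_le_sum_abs _ _
    _ ≤ (1/(n:ℝ)) * ∑ i ∈ Finset.range n, (2*δ) := by
        gcongr with i hi
        exact hterm i (Finset.mem_range.mp hi)
    _ = 2*δ := by
        rw [Finset.sum_const, Finset.card_range, nsmul_eq_mul]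
        field_simp

/-- let `(X_{i,j})` be an i.i.d. array of exponential rate-1 random variables
and `S_{i,n} = X_{i,1}+⋯+X_{i,n}`. Then almost surely
`(1/n) ∑_{i=1}^n log(n/S_{i,n}) → 0` as `n → ∞`; i.e. if `D⁽ⁿ⁾` is the diagonal matrix
with entries `1/S_{i,n}`, then almost surely `(1/n)·log|det(n·D⁽ⁿ⁾)| → 0`. -/
theorem avg_log_n_div_rowSum_tendsto_zero
    {Ω : Type*} [MeasurableSpace Ω] (P : Measure Ω) [IsProbabilityMeasure P]
    (X : ℕ → ℕ → Ω → ℝ) (hmeas : ∀ i j, Measurable (X i j))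
    (hindep : iIndepFun (fun (p : ℕ × ℕ) ω => X p.1 p.2 ω) P)
    (hlaw : ∀ i j, P.map (X i j) = expMeasure 1) :
    ∀ᵐ ω ∂P,
      Tendsto (fun n : ℕ =>
          (1 / (n : ℝ)) * ∑ i ∈ Finset.range n,
            Real.log ((n : ℝ) / ∑ j ∈ Finset.range n, X i j ω))
        atTop (𝓝 0) := by
  -- row independence
  have hrow : ∀ i, iIndepFun (fun j => X i j) P := by
    intro i
    exact my_iIndepFun_precomp hindep
      (g := fun j => (i, j)) (fun a b h => by simpa using h)
  -- key eventual bound for each δ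
  have key : ∀ δ : ℝ, 0 < δ → δ ≤ 1/2 → ∀ᵐ ω ∂P, ∀ᶠ n : ℕ in atTop,
      |(1 / (n : ℝ)) * ∑ i ∈ Finset.range n,
          Real.log ((n : ℝ) / ∑ j ∈ Finset.range n, X i j ω)| ≤ 2*δ := by
    intro δ hδ0 hδ2
    set c : ℝ := δ^2/8 with hc
    have hcpos : 0 < c := by positivity
    set A : ℕ → Set Ω := fun n => ⋃ i ∈ Finset.range n,
      ({ω | (n:ℝ)*(1+δ) ≤ ∑ j ∈ Finset.range n, X i j ω}
        ∪ {ω | ∑ j ∈ Finset.range n, X i j ω ≤ (n:ℝ)*(1-δ)}) with hA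
    have hAbound : ∀ n, P (A n) ≤ ENNReal.ofReal (2 * n * exp (-(n:ℝ)*c)) := by
      intro n
      calc P (A n) ≤ ∑ i ∈ Finset.range n,
          P ({ω | (n:ℝ)*(1+δ) ≤ ∑ j ∈ Finset.range n, X i j ω}
            ∪ {ω | ∑ j ∈ Finset.range n, X i j ω ≤ (n:ℝ)*(1-δ)}) :=
            measure_biUnion_finset_le _ _
        _ ≤ ∑ _i ∈ Finset.range n, ENNReal.ofReal (2 * exp (-(n:ℝ)*c)) := by
            refine Finset.sum_le_sum (fun i _ => ?_)
            obtain ⟨hu, hl⟩ := chernoff_tail P (fun j => X i j) (hmeas i) (hrow i)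
              (hlaw i) hδ0 (by linarith) n
            calc P _ ≤ _ + _ := measure_union_le _ _
              _ ≤ ENNReal.ofReal (exp (-(n:ℝ)*c)) + ENNReal.ofReal (exp (-(n:ℝ)*c)) :=
                  add_le_add hu hl
              _ = ENNReal.ofReal (2 * exp (-(n:ℝ)*c)) := by
                  rw [← ENNReal.ofReal_add (by positivity) (by positivity)]; ring_nf
        _ = (n : ℝ≥0∞) * ENNReal.ofReal (2 * exp (-(n:ℝ)*c)) := by
            rw [Finset.sum_const, Finset.card_range, nsmul_eq_mul]
        _ = ENNReal.ofReal (2 * n * exp (-(n:ℝ)*c)) := by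
            rw [← ENNReal.ofReal_natCast n, ← ENNReal.ofReal_mul (by positivity)]
            ring_nf
    have hsum : Summable (fun n : ℕ => 2 * (n:ℝ) * exp (-(n:ℝ)*c)) := by
      have hr : ‖exp (-c)‖ < 1 := by
        rw [Real.norm_eq_abs, abs_of_pos (exp_pos _)]
        exact exp_lt_one_iff.mpr (by linarith)
      have h := (summable_pow_mul_geometric_of_norm_lt_one 1 hr).mul_left 2
      refine h.congr (fun n => ?_)
      rw [pow_one, ← Real.exp_nat_mul]
      ring_nf
    have htsum : (∑' n, P (A n)) ≠ ∞ := by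
      refine ne_top_of_le_ne_top ?_ (ENNReal.tsum_le_tsum hAbound)
      rw [← ENNReal.ofReal_tsum_of_nonneg (fun n => by positivity) hsum]
      exact ENNReal.ofReal_ne_top
    filter_upwards [MeasureTheory.ae_eventually_notMem htsum] with ω hω
    filter_upwards [hω, eventually_ge_atTop 1] with n hn hn1
    refine det_bound hδ0 hδ2 hn1 (fun i hi => ?_)
    have : ω ∉ A n := hn
    rw [hA] at this
    simp only [Set.mem_iUnion, Set.mem_union, Set.mem_setOf_eq, not_exists, not_or] at this
    obtain ⟨h1, h2⟩ := this i (Finset.mem_range.mpr hi)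
    exact ⟨not_le.mp h2, not_le.mp h1⟩
  have all : ∀ᵐ ω ∂P, ∀ k : ℕ, ∀ᶠ n : ℕ in atTop,
      |(1 / (n : ℝ)) * ∑ i ∈ Finset.range n,
          Real.log ((n : ℝ) / ∑ j ∈ Finset.range n, X i j ω)| ≤ 2*(1/(2*((k:ℝ)+1))) := by
    rw [ae_all_iff]
    intro k
    refine key _ (by positivity) ?_
    have hk : (0:ℝ) ≤ (k:ℝ) := Nat.cast_nonneg k
    rw [div_le_div_iff₀ (by positivity) (by norm_num)]
    linarith
  filter_upwards [all] with ω hω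
  rw [NormedAddCommGroup.tendsto_nhds_zero]
  intro ε hε
  obtain ⟨k, hk⟩ := exists_nat_one_div_lt hε
  filter_upwards [hω k] with n hn
  rw [Real.norm_eq_abs]
  calc |(1 / (n : ℝ)) * ∑ i ∈ Finset.range n,
          Real.log ((n : ℝ) / ∑ j ∈ Finset.range n, X i j ω)|
      ≤ 2*(1/(2*((k:ℝ)+1))) := hn
    _ = 1/((k:ℝ)+1) := by field_simp
    _ < ε := hk
end
end
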